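/- arXiv:0809.2719 — 7 statements merged into one kernel-verified Lean document; each statement's English description precedes it below -/
import Mathlib

section
/- Let φ be a continuous RDS on a Polish space E over an MDS (Ω,𝓕,P,(ϑ_t)). If φ has a strong B-attractor, then for every ε>0 there exists a compact subset C_ε of E such that for each δ>0 and each bounded and closed subset B of E one has P{B ⊆ ⋃_{s≥0} ⋂_{t≥s} φ(t,ϑ_{-t}ω)^{-1}(C_ε^δ)} ≥ 1−ε. -/
open MeasureTheory Set Filter Topology Metric

noncomputable section

/-- Hausdorff semi-distance `d(B, A) = sup_{b ∈ B} inf_{a ∈ A} d(b, a)`, valued in `ℝ≥0∞`. -/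
def semiDist {E : Type*} [PseudoEMetricSpace E] (B A : Set E) : ENNReal :=
  ⨆ b ∈ B, EMetric.infEdist b A

/-- A metric dynamical system (MDS) over the probability space `(Ω, 𝓕, P)`. -/
structure MetricDS (Ω : Type*) [MeasurableSpace Ω] (P : Measure Ω) where
  θ : ℝ → Ω → Ω
  measurable_theta : Measurable fun p : ℝ × Ω => θ p.1 p.2
  theta_add : ∀ s t : ℝ, θ (s + t) = θ s ∘ θ t
  theta_zero : θ 0 = id
  measurePreserving_theta : ∀ t : ℝ, MeasurePreserving (θ t) P P

/-- A continuous random dynamical system (RDS) `φ` on `E` over an MDS, with time `[0,∞)`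
(the map is defined for all real times, but only its restriction to `t ≥ 0` is constrained). -/
structure ContinuousRDS (E Ω : Type*) [MetricSpace E] [MeasurableSpace E]
    [MeasurableSpace Ω] (P : Measure Ω) extends MetricDS Ω P where
  φ : ℝ → E → Ω → E
  measurable_phi : Measurable fun p : ℝ × E × Ω => φ p.1 p.2.1 p.2.2
  cocycle : ∀ s t : ℝ, 0 ≤ s → 0 ≤ t → ∀ x ω, φ (t + s) x ω = φ t (φ s x ω) (θ s ω)
  phi_zero : ∀ x ω, φ 0 x ω = x
  continuous_phi : ∀ t : ℝ, 0 ≤ t → ∀ ω, Continuous fun x => φ t x ω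

variable {E Ω : Type*} [MetricSpace E] [MeasurableSpace E] [MeasurableSpace Ω] {P : Measure Ω}

/-- A compact random set: values are nonempty compact subsets of `E`, and
`ω ↦ d(x, K ω)` is measurable for every `x`. -/
def IsCompactRandomSet (K : Ω → Set E) : Prop :=
  (∀ ω, IsCompact (K ω)) ∧ (∀ ω, (K ω).Nonempty) ∧
    ∀ x : E, Measurable fun ω => infDist x (K ω)

/-- Strict `φ`-invariance: for each `t ≥ 0`, a.s. `φ(t,ω)(A(ω)) = A(ϑ_t ω)`. -/
def StrictlyInvariant (ψ : ContinuousRDS E Ω P) (A : Ω → Set E) : Prop :=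
  ∀ t : ℝ, 0 ≤ t → ∀ᵐ ω ∂P, (fun x => ψ.φ t x ω) '' A ω = A (ψ.θ t ω)

/-- `K` attracts `B` strongly: `d(φ(t, ϑ_{-t} ω)(B), K(ω)) → 0` almost surely. -/
def StronglyAttracts (ψ : ContinuousRDS E Ω P) (K : Ω → Set E) (B : Set E) : Prop :=
  ∀ᵐ ω ∂P, Tendsto (fun t : ℝ =>
    semiDist ((fun x => ψ.φ t x (ψ.θ (-t) ω)) '' B) (K ω)) atTop (𝓝 0)

/-- `K` attracts `B` weakly: `d(φ(t, ϑ_{-t} ω)(B), K(ω)) → 0` in probability. -/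
def WeaklyAttracts (ψ : ContinuousRDS E Ω P) (K : Ω → Set E) (B : Set E) : Prop :=
  ∀ ε : ENNReal, 0 < ε → Tendsto (fun t : ℝ =>
    P {ω | ε < semiDist ((fun x => ψ.φ t x (ψ.θ (-t) ω)) '' B) (K ω)}) atTop (𝓝 0)

/-- Forward version of weak attraction: `sup_{x ∈ B} d(φ(t,ω)(x), A(ϑ_t ω)) → 0` in probability. -/
def WeaklyAttractsForward (ψ : ContinuousRDS E Ω P) (A : Ω → Set E) (B : Set E) : Prop :=
  ∀ ε : ENNReal, 0 < ε → Tendsto (fun t : ℝ =>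
    P {ω | ε < semiDist ((fun x => ψ.φ t x ω) '' B) (A (ψ.θ t ω))}) atTop (𝓝 0)

/-- A strong `𝓑`-attractor. -/
def IsStrongAttractor (ψ : ContinuousRDS E Ω P) (𝓑 : Set (Set E)) (A : Ω → Set E) : Prop :=
  IsCompactRandomSet A ∧ StrictlyInvariant ψ A ∧ ∀ B ∈ 𝓑, StronglyAttracts ψ A B

/-- A weak `𝓑`-attractor. -/
def IsWeakAttractor (ψ : ContinuousRDS E Ω P) (𝓑 : Set (Set E)) (A : Ω → Set E) : Prop :=
  IsCompactRandomSet A ∧ StrictlyInvariant ψ A ∧ ∀ B ∈ 𝓑, WeaklyAttractsForward ψ A B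

/-- The `Ω`-limit set of a set `B ⊆ E`:
`Ω_B(ω) = ⋂_{T ≥ 0} closure (⋃_{t ≥ T} φ(t, ϑ_{-t} ω)(B))`. -/
def omegaLimitSet (ψ : ContinuousRDS E Ω P) (B : Set E) (ω : Ω) : Set E :=
  ⋂ T ∈ Ici (0:ℝ), closure (⋃ t ∈ Ici T, (fun x => ψ.φ t x (ψ.θ (-t) ω)) '' B)

set_option linter.unusedSectionVars false in
/-- The event that a compact random set is contained in a fixed closed set is measurable. -/
lemma measurableSet_subset_closed' {A : Ω → Set E} (hne : ∀ ω, (A ω).Nonempty)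
    (hmA : ∀ x : E, Measurable fun ω => infDist x (A ω))
    (u : ℕ → E) (hu : DenseRange u) {K : Set E} (hK : IsClosed K) :
    MeasurableSet {ω | A ω ⊆ K} := by
  have key : {ω | A ω ⊆ K} = (⋃ (k : ℕ) (q : ℚ) (_ : ball (u k) q ⊆ Kᶜ),
      {ω | infDist (u k) (A ω) < (q : ℝ)})ᶜ := by
    ext ω
    simp only [mem_compl_iff, mem_iUnion, mem_setOf_eq, not_exists]
    constructor
    · rintro hsub k q hq hlt
      obtain ⟨a, ha, hd⟩ := (infDist_lt_iff (hne ω)).1 hlt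
      exact hq (by simpa [mem_ball, dist_comm] using hd) (hsub ha)
    · intro h a ha
      by_contra hak
      obtain ⟨r, hr, hball⟩ := Metric.isOpen_iff.1 hK.isOpen_compl a hak
      obtain ⟨k, hk⟩ := hu.exists_dist_lt a (by linarith : (0:ℝ) < r/3)
      obtain ⟨q, hq1, hq2⟩ := exists_rat_btwn (by linarith : r/3 < 2*r/3)
      refine h k q (fun y hy => hball ?_) ?_
      · rw [mem_ball] at hy ⊢
        have h3 : dist y a ≤ dist y (u k) + dist (u k) a := dist_triangle _ _ _
        rw [dist_comm (u k) a] at h3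
        linarith
      · calc infDist (u k) (A ω) ≤ dist (u k) a := infDist_le_dist_of_mem ha
          _ = dist a (u k) := dist_comm _ _
          _ < (q : ℝ) := by linarith
  rw [key]
  exact (MeasurableSet.iUnion fun k => MeasurableSet.iUnion fun q =>
    MeasurableSet.iUnion fun _ => measurableSet_lt (hmA _) measurable_const).compl

lemma tsum_half_pow' : ∑' n : ℕ, ((2:ENNReal)⁻¹) ^ (n+1) = 1 := by
  have h : ∀ n : ℕ, ((2:ENNReal)⁻¹) ^ (n+1) = 2⁻¹ * 2⁻¹ ^ n := fun n => by ring
  simp_rw [h]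
  rw [ENNReal.tsum_mul_left, ENNReal.tsum_geometric, ENNReal.one_sub_inv_two, inv_inv,
    ENNReal.inv_mul_cancel (by norm_num) (by norm_num)]


/-- If `φ` has a strong `B`-attractor, then for every `ε > 0` there is a compact `Cε` such that
for each `δ > 0` and each bounded closed `B ⊆ E`,
`P{B ⊆ ⋃_{s ≥ 0} ⋂_{t ≥ s} φ(t, ϑ_{-t} ω)⁻¹(Cε^δ)} ≥ 1 - ε`. -/
theorem strongB_attractor_necessary_condition
    [CompleteSpace E] [SecondCountableTopology E] [BorelSpace E] [IsProbabilityMeasure P]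
    (ψ : ContinuousRDS E Ω P) (A : Ω → Set E)
    (hA : IsStrongAttractor ψ {B : Set E | Bornology.IsBounded B} A) :
    ∀ ε : ℝ, 0 < ε → ∃ Cε : Set E, IsCompact Cε ∧
      ∀ δ : ℝ, 0 < δ → ∀ B : Set E, Bornology.IsBounded B → IsClosed B →
        ENNReal.ofReal (1 - ε) ≤
          P {ω | B ⊆ ⋃ s ∈ Ici (0:ℝ), ⋂ t ∈ Ici s,
              (fun x => ψ.φ t x (ψ.θ (-t) ω)) ⁻¹' cthickening δ Cε} := by
  obtain ⟨⟨hAcomp, hAne, hAmeas⟩, _hinv, hattr⟩ := hA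
  intro ε hε
  rcases isEmpty_or_nonempty E with hE | hE
  · refine ⟨∅, isCompact_empty, fun δ hδ B hB hBc => ?_⟩
    have hBe : B = ∅ := eq_empty_of_isEmpty B
    have : {ω | B ⊆ ⋃ s ∈ Ici (0:ℝ), ⋂ t ∈ Ici s,
        (fun x => ψ.φ t x (ψ.θ (-t) ω)) ⁻¹' cthickening δ (∅ : Set E)} = univ := by
      refine eq_univ_of_forall fun ω => ?_
      simp [hBe]
    rw [this, measure_univ]
    exact ENNReal.ofReal_le_one.2 (by linarith)
  · set u := TopologicalSpace.denseSeq E with hu_def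
    have hu : DenseRange u := TopologicalSpace.denseRange_denseSeq E
    set U : ℕ → ℕ → Set E := fun n mm => ⋃ k ∈ Finset.range (mm+1),
      closedBall (u k) (1/(n+1)) with hU_def
    have hUclosed : ∀ n mm, IsClosed (U n mm) := fun n mm =>
      (Finset.range (mm+1)).finite_toSet.isClosed_biUnion fun k _ => isClosed_closedBall
    have hUmono : ∀ n, Monotone (U n) := by
      intro n m₁ m₂ hle x hx
      rw [mem_iUnion₂] at hx ⊢
      obtain ⟨k, hk, hxk⟩ := hx
      exact ⟨k, Finset.mem_range.2 (lt_of_lt_of_le (Finset.mem_range.1 hk) (by omega)), hxk⟩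
    set Ev : ℕ → ℕ → Set Ω := fun n mm => {ω | A ω ⊆ U n mm} with hEv_def
    have hEvMeas : ∀ n mm, MeasurableSet (Ev n mm) := fun n mm =>
      measurableSet_subset_closed' hAne hAmeas u hu (hUclosed n mm)
    have hEvUnion : ∀ n, ⋃ mm, Ev n mm = univ := by
      intro n
      refine eq_univ_of_forall fun ω => ?_
      have hr : (0:ℝ) < 1/(n+1) := by positivity
      have hcov : A ω ⊆ ⋃ k : ℕ, ball (u k) (1/(n+1)) := by
        intro a _
        obtain ⟨k, hk⟩ := hu.exists_dist_lt a hr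
        exact mem_iUnion.2 ⟨k, by simpa [mem_ball, dist_comm] using hk⟩
      obtain ⟨t, ht⟩ := (hAcomp ω).elim_finite_subcover
        (fun k : ℕ => ball (u k) (1/(n+1))) (fun k => isOpen_ball) hcov
      refine mem_iUnion.2 ⟨t.sup id, fun a ha => ?_⟩
      obtain ⟨k, hkt, hak⟩ := mem_iUnion₂.1 (ht ha)
      refine mem_iUnion₂.2 ⟨k, Finset.mem_range.2 ?_, ball_subset_closedBall hak⟩
      exact Nat.lt_succ_of_le (Finset.le_sup (f := id) hkt)
    have hEvTend : ∀ n, Tendsto (fun mm => P (Ev n mm)ᶜ) atTop (𝓝 0) := by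
      intro n
      have hanti : Antitone fun mm => (Ev n mm)ᶜ := fun m₁ m₂ hle =>
        compl_subset_compl.2 fun ω hω => hω.trans (hUmono n hle)
      have := tendsto_measure_iInter_atTop (μ := P)
        (fun mm => ((hEvMeas n mm).compl).nullMeasurableSet) hanti
        ⟨0, measure_ne_top _ _⟩
      rwa [show ⋂ mm, (Ev n mm)ᶜ = ∅ by rw [← compl_iUnion, hEvUnion n, compl_univ],
        measure_empty] at this
    have hc : ∀ n : ℕ, (0:ENNReal) < ENNReal.ofReal ε * 2⁻¹ ^ (n+1) := by
      intro n
      refine ENNReal.mul_pos (by simpa using (ENNReal.ofReal_pos.2 hε).ne') ?_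
      exact (pow_ne_zero _ (by norm_num))
    choose m hmlt using fun n => ((hEvTend n).eventually_lt_const (hc n)).exists
    set Cε := ⋂ n, U n (m n) with hC_def
    have hCcomp : IsCompact Cε := by
      refine TotallyBounded.isCompact_of_isClosed ?_
        (isClosed_iInter fun n => hUclosed n (m n))
      rw [totallyBounded_iff]
      intro ε' hε'
      obtain ⟨n, hn⟩ := exists_nat_one_div_lt hε'
      refine ⟨u '' {k | k < m n + 1}, (Set.finite_Iio _).image u, fun x hx => ?_⟩
      have hxU : x ∈ U n (m n) := iInter_subset _ n hx
      obtain ⟨k, hk, hxk⟩ := mem_iUnion₂.1 hxU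
      refine mem_iUnion₂.2 ⟨u k, ⟨k, Finset.mem_range.1 hk, rfl⟩, ?_⟩
      exact closedBall_subset_ball hn hxk
    refine ⟨Cε, hCcomp, fun δ hδ B hB _hBc => ?_⟩
    set G := ⋂ n, Ev n (m n) with hG_def
    have hGmeas : MeasurableSet G := MeasurableSet.iInter fun n => hEvMeas n (m n)
    have hGc : P Gᶜ ≤ ENNReal.ofReal ε := by
      rw [hG_def, compl_iInter]
      calc P (⋃ n, (Ev n (m n))ᶜ) ≤ ∑' n, P (Ev n (m n))ᶜ := measure_iUnion_le _
        _ ≤ ∑' n : ℕ, ENNReal.ofReal ε * 2⁻¹ ^ (n+1) :=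
            ENNReal.tsum_le_tsum fun n => (hmlt n).le
        _ = ENNReal.ofReal ε * ∑' n : ℕ, ((2:ENNReal)⁻¹) ^ (n+1) := ENNReal.tsum_mul_left
        _ = ENNReal.ofReal ε := by rw [tsum_half_pow', mul_one]
    have key : ∀ᵐ ω ∂P, ω ∈ G → ω ∈ {ω | B ⊆ ⋃ s ∈ Ici (0:ℝ), ⋂ t ∈ Ici s,
        (fun x => ψ.φ t x (ψ.θ (-t) ω)) ⁻¹' cthickening δ Cε} := by
      filter_upwards [hattr B hB] with ω hω hωG
      have hAC : A ω ⊆ Cε := subset_iInter fun n => mem_iInter.1 hωG n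
      have hδ' : (0:ENNReal) < ENNReal.ofReal δ := ENNReal.ofReal_pos.2 hδ
      obtain ⟨s₀, hs₀⟩ := eventually_atTop.1 (hω.eventually_lt_const hδ')
      intro x hx
      refine mem_biUnion (mem_Ici.2 (le_max_right s₀ 0)) (mem_iInter₂.2 fun t ht => ?_)
      have htt : s₀ ≤ t := le_trans (le_max_left _ _) (mem_Ici.1 ht)
      have hmem : ψ.φ t x (ψ.θ (-t) ω) ∈ (fun x => ψ.φ t x (ψ.θ (-t) ω)) '' B :=
        ⟨x, hx, rfl⟩
      have h1 : EMetric.infEdist (ψ.φ t x (ψ.θ (-t) ω)) (A ω) ≤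
          semiDist ((fun x => ψ.φ t x (ψ.θ (-t) ω)) '' B) (A ω) := by
        simp only [semiDist]
        exact le_iSup₂ (f := fun b _ => EMetric.infEdist b (A ω)) _ hmem
      have h2 : EMetric.infEdist (ψ.φ t x (ψ.θ (-t) ω)) Cε ≤ ENNReal.ofReal δ :=
        le_trans (EMetric.infEdist_anti hAC) (le_trans h1 (hs₀ t htt).le)
      exact mem_cthickening_iff.2 h2
    have h1 : (1:ENNReal) - ENNReal.ofReal ε ≤ P G := by
      rw [tsub_le_iff_right]
      calc (1:ENNReal) = P G + P Gᶜ := by rw [measure_add_measure_compl hGmeas, measure_univ]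
        _ ≤ P G + ENNReal.ofReal ε := add_le_add le_rfl hGc
    calc ENNReal.ofReal (1-ε) ≤ 1 - ENNReal.ofReal ε := by
          rw [ENNReal.ofReal_sub _ hε.le, ENNReal.ofReal_one]
      _ ≤ P G := h1
      _ ≤ _ := measure_mono_ae key
end
end

section
/- Let φ be a continuous RDS on a Polish space E over an MDS (Ω,𝓕,P,(ϑ_t)). If there exists a compact random set K which strongly attracts every bounded subset of E, then φ has a strong B-attractor. -/
open MeasureTheory Set Filter Topology Metric

noncomputable section

variable {E Ω : Type*} [MetricSpace E] [MeasurableSpace E] [MeasurableSpace Ω] {P : Measure Ω}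

open scoped ENNReal

section RDSAux

variable {E Ω : Type*} [MetricSpace E] [MeasurableSpace E] [MeasurableSpace Ω] {P : Measure Ω}

-- ### auxiliary lemmas

namespace RDSA

theorem theta_comp (ψ : ContinuousRDS E Ω P) (a b : ℝ) (ω : Ω) :
    ψ.θ a (ψ.θ b ω) = ψ.θ (a + b) ω := by
  rw [ψ.theta_add a b]; rfl

theorem le_semiDist {B A : Set E} {b : E} (hb : b ∈ B) :
    EMetric.infEdist b A ≤ semiDist B A :=
  le_iSup₂ (f := fun b (_ : b ∈ B) => EMetric.infEdist b A) b hb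

theorem semiDist_mono {B B' A : Set E} (h : B ⊆ B') : semiDist B A ≤ semiDist B' A :=
  iSup₂_le fun _ hb => le_semiDist (h hb)

theorem edist_tendsto_of_tendsto {p : ℕ → E} {y : E} (hp : Tendsto p atTop (𝓝 y)) :
    Tendsto (fun j => edist y (p j)) atTop (𝓝 0) := by
  have h : Continuous fun z : E => edist y z := continuous_const.edist continuous_id
  have h2 := (h.tendsto y).comp hp
  simpa [edist_self, Function.comp_def] using h2

theorem tendsto_of_edist_le {p : ℕ → E} {y : E} {d : ℕ → ℝ≥0∞}
    (h : ∀ j, edist y (p j) ≤ d j) (h0 : Tendsto d atTop (𝓝 0)) :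
    Tendsto p atTop (𝓝 y) := by
  rw [EMetric.tendsto_atTop]
  intro ε hε
  obtain ⟨N, hN⟩ := eventually_atTop.1 (h0.eventually_lt_const hε)
  refine ⟨N, fun n hn => lt_of_le_of_lt ?_ (hN n hn)⟩
  rw [edist_comm]; exact h n

theorem inv_nat_succ_tendsto :
    Tendsto (fun j : ℕ => ((j + 1 : ℕ) : ℝ≥0∞)⁻¹) atTop (𝓝 0) :=
  ENNReal.tendsto_inv_nat_nhds_zero.comp (tendsto_add_atTop_nat 1)

theorem exists_subseq_tendsto {K : Set E} (hKc : IsCompact K) (hne : K.Nonempty)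
    {z : ℕ → E} (hz : Tendsto (fun j => EMetric.infEdist (z j) K) atTop (𝓝 0)) :
    ∃ w ∈ K, ∃ ι : ℕ → ℕ, StrictMono ι ∧ Tendsto (z ∘ ι) atTop (𝓝 w) := by
  choose w hwK hwe using fun j => hKc.exists_infEdist_eq_edist hne (z j)
  obtain ⟨w0, hw0K, ι, hι, hconv⟩ := hKc.tendsto_subseq hwK
  refine ⟨w0, hw0K, ι, hι, ?_⟩
  refine tendsto_of_edist_le (d := fun j => edist w0 (w (ι j)) + EMetric.infEdist (z (ι j)) K)
    (fun j => ?_) ?_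
  · calc edist w0 (z (ι j)) ≤ edist w0 (w (ι j)) + edist (w (ι j)) (z (ι j)) :=
        edist_triangle _ _ _
    _ = edist w0 (w (ι j)) + EMetric.infEdist (z (ι j)) K := by
        rw [edist_comm (w (ι j)), ← hwe (ι j)]; rfl
  · have h1 : Tendsto (fun j => edist w0 (w (ι j))) atTop (𝓝 0) :=
      edist_tendsto_of_tendsto hconv
    have h2 : Tendsto (fun j => EMetric.infEdist (z (ι j)) K) atTop (𝓝 0) :=
      hz.comp hι.tendsto_atTop
    simpa using h1.add h2

end RDSA

end RDSAux

section Part2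

variable {E Ω : Type*} [MetricSpace E] [MeasurableSpace E] [MeasurableSpace Ω] {P : Measure Ω}

namespace RDSA

/-- image of the closed ball of radius `c` under the time-`k` pullback cocycle map. -/
def ballImg (ψ : ContinuousRDS E Ω P) (x₀ : E) (c k : ℕ) (ω : Ω) : Set E :=
  (fun x => ψ.φ (k : ℝ) x (ψ.θ (-(k : ℝ)) ω)) '' Metric.closedBall x₀ (c : ℝ)

/-- tail union of pullback images over integer times `k ≥ m`. -/
def tailSet (ψ : ContinuousRDS E Ω P) (x₀ : E) (c m : ℕ) (ω : Ω) : Set E :=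
  closure (⋃ k, ⋃ (_ : m ≤ k), ballImg ψ x₀ c k ω)

/-- discrete-time pullback Ω-limit set of the closed ball of radius `c`. -/
def omegaC (ψ : ContinuousRDS E Ω P) (x₀ : E) (c : ℕ) (ω : Ω) : Set E :=
  ⋂ m, tailSet ψ x₀ c m ω

/-- candidate attractor. -/
def AA (ψ : ContinuousRDS E Ω P) (x₀ : E) (ω : Ω) : Set E :=
  closure (⋃ c, omegaC ψ x₀ c ω)

/-- the set of "good" fibers on which all required a.s. facts hold. -/
def Good (ψ : ContinuousRDS E Ω P) (K : Ω → Set E) (x₀ : E) (ω : Ω) : Prop :=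
  (∀ n : ℕ, ∀ s : ℚ, 0 ≤ s →
    Tendsto (fun u : ℝ => semiDist
      ((fun x => ψ.φ u x (ψ.θ (-u) (ψ.θ (-(s : ℝ)) ω))) '' Metric.closedBall x₀ (n : ℝ))
      (K (ψ.θ (-(s : ℝ)) ω))) atTop (𝓝 0))
  ∧ (∃ c : ℕ, ∀ m : ℕ, ∃ k, m ≤ k ∧ K (ψ.θ (-(k : ℝ)) ω) ⊆ Metric.closedBall x₀ (c : ℝ))

variable {ψ : ContinuousRDS E Ω P} {K : Ω → Set E} {x₀ : E} {ω : Ω}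

theorem good_attr (hg : Good ψ K x₀ ω) (n : ℕ) :
    Tendsto (fun u : ℝ => semiDist
      ((fun x => ψ.φ u x (ψ.θ (-u) ω)) '' Metric.closedBall x₀ (n : ℝ)) (K ω))
      atTop (𝓝 0) := by
  have h := hg.1 n 0 le_rfl
  simpa [ψ.theta_zero] using h

theorem tailSet_anti {m m' : ℕ} (h : m ≤ m') (c : ℕ) :
    tailSet ψ x₀ c m' ω ⊆ tailSet ψ x₀ c m ω := by
  apply closure_mono
  exact iUnion₂_subset fun k hk => subset_iUnion₂ (s := fun k _ => ballImg ψ x₀ c k ω) k (h.trans hk)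

theorem tail_near_K (hg : Good ψ K x₀ ω) (c : ℕ) {δ : ℝ≥0∞} (hδ : 0 < δ) :
    ∃ M : ℕ, ∀ m, M ≤ m → ∀ p ∈ tailSet ψ x₀ c m ω, EMetric.infEdist p (K ω) ≤ δ := by
  have h2 := (ENNReal.tendsto_nhds_zero.1 (good_attr hg c)) (δ / 2) (ENNReal.half_pos hδ.ne')
  obtain ⟨T, hT⟩ := eventually_atTop.1 h2
  refine ⟨⌈T⌉₊, fun m hm p hp => ?_⟩
  obtain ⟨q, hq, hqd⟩ := EMetric.mem_closure_iff.1 hp (δ / 2) (ENNReal.half_pos hδ.ne')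
  obtain ⟨k, hk, hqmem⟩ := mem_iUnion₂.1 hq
  have hkT : T ≤ (k : ℝ) := by
    calc T ≤ (⌈T⌉₊ : ℝ) := Nat.le_ceil T
    _ ≤ (m : ℝ) := by exact_mod_cast hm
    _ ≤ (k : ℝ) := by exact_mod_cast hk
  have hqK : EMetric.infEdist q (K ω) ≤ δ / 2 :=
    le_trans (le_semiDist hqmem) (hT (k : ℝ) hkT)
  calc EMetric.infEdist p (K ω) ≤ edist p q + EMetric.infEdist q (K ω) :=
      EMetric.infEdist_le_edist_add_infEdist
  _ ≤ δ / 2 + δ / 2 := add_le_add hqd.le hqK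
  _ = δ := ENNReal.add_halves δ

theorem omegaC_subset_K (hKc : IsCompactRandomSet K) (hg : Good ψ K x₀ ω) (c : ℕ) :
    omegaC ψ x₀ c ω ⊆ K ω := by
  intro y hy
  have hbound : ∀ δ : ℝ≥0∞, 0 < δ → EMetric.infEdist y (K ω) ≤ δ := by
    intro δ hδ
    obtain ⟨M, hM⟩ := tail_near_K hg c hδ
    exact hM M le_rfl y (mem_iInter.1 hy M)
  have h0 : EMetric.infEdist y (K ω) = 0 := by
    have hle : EMetric.infEdist y (K ω) ≤ (0 : ℝ≥0∞) := by
      refine le_of_tendsto_of_tendsto'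
        (tendsto_const_nhds (α := ℕ) (f := atTop)) inv_nat_succ_tendsto fun j => ?_
      exact hbound _ (by simp)
    simpa using hle
  have := EMetric.mem_closure_iff_infEdist_zero.2 h0
  rwa [(hKc.1 ω).isClosed.closure_eq] at this

theorem AA_subset_K (hKc : IsCompactRandomSet K) (hg : Good ψ K x₀ ω) :
    AA ψ x₀ ω ⊆ K ω :=
  closure_minimal (iUnion_subset fun c => omegaC_subset_K hKc hg c) (hKc.1 ω).isClosed

theorem AA_compact (hKc : IsCompactRandomSet K) (hg : Good ψ K x₀ ω) :
    IsCompact (AA ψ x₀ ω) :=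
  (hKc.1 ω).of_isClosed_subset isClosed_closure (AA_subset_K hKc hg)

end RDSA

end Part2

section Part3

variable {E Ω : Type*} [MetricSpace E] [MeasurableSpace E] [MeasurableSpace Ω] {P : Measure Ω}

namespace RDSA

variable {ψ : ContinuousRDS E Ω P} {K : Ω → Set E} {x₀ : E} {ω : Ω}

theorem capture_aux (hKc : IsCompactRandomSet K) (hg : Good ψ K x₀ ω)
    {u : ℕ → ℝ} (hu : Tendsto u atTop atTop) {n : ℕ} {x : ℕ → E}
    (hx : ∀ j, x j ∈ Metric.closedBall x₀ (n : ℝ)) {y : E}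
    (hy : Tendsto (fun j => ψ.φ (u j) (x j) (ψ.θ (-(u j)) ω)) atTop (𝓝 y))
    (s : ℚ) (hs : 0 ≤ s) :
    ∃ w ∈ K (ψ.θ (-(s : ℝ)) ω), y = ψ.φ (s : ℝ) w (ψ.θ (-(s : ℝ)) ω) := by
  have hs' : (0 : ℝ) ≤ (s : ℝ) := by exact_mod_cast hs
  obtain ⟨N, hN⟩ := eventually_atTop.1 (hu.eventually (eventually_ge_atTop (s : ℝ)))
  set ω' := ψ.θ (-(s : ℝ)) ω with hω'
  set v : ℕ → ℝ := fun j => u (j + N) with hv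
  have hvs : ∀ j, (s : ℝ) ≤ v j := fun j => hN (j + N) (Nat.le_add_left _ _)
  set z : ℕ → E := fun j => ψ.φ (v j - (s : ℝ)) (x (j + N)) (ψ.θ (-(v j)) ω) with hz
  have hfib : ∀ j, ψ.θ (-(v j - (s : ℝ))) ω' = ψ.θ (-(v j)) ω := by
    intro j; rw [hω', theta_comp]; congr 1; ring
  have hkey : ∀ j, ψ.φ (v j) (x (j + N)) (ψ.θ (-(v j)) ω) = ψ.φ (s : ℝ) (z j) ω' := by
    intro j
    have hc := ψ.cocycle (v j - (s : ℝ)) (s : ℝ) (by linarith [hvs j]) hs'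
      (x (j + N)) (ψ.θ (-(v j)) ω)
    rw [show (s : ℝ) + (v j - (s : ℝ)) = v j from by ring] at hc
    have hfib2 : ψ.θ (v j - (s : ℝ)) (ψ.θ (-(v j)) ω) = ω' := by
      rw [theta_comp, hω']; congr 1; ring
    rw [hc, hfib2]
  have hztend : Tendsto (fun j => EMetric.infEdist (z j) (K ω')) atTop (𝓝 0) := by
    have hv0 : Tendsto v atTop atTop := hu.comp (tendsto_add_atTop_nat N)
    have hvt : Tendsto (fun j => v j - (s : ℝ)) atTop atTop := by
      simpa [sub_eq_add_neg] using tendsto_atTop_add_const_right atTop (-(s : ℝ)) hv0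
    have hcomp := (hg.1 n s hs).comp hvt
    refine tendsto_of_tendsto_of_tendsto_of_le_of_le tendsto_const_nhds hcomp
      (fun j => zero_le) fun j => ?_
    refine le_semiDist ⟨x (j + N), hx (j + N), ?_⟩
    simp only
    rw [hfib j]
  obtain ⟨w, hwK, ι, hι, hconv⟩ := exists_subseq_tendsto (hKc.1 ω') (hKc.2.1 ω') hztend
  refine ⟨w, hwK, ?_⟩
  have hlim1 : Tendsto (fun j => ψ.φ (s : ℝ) (z (ι j)) ω') atTop (𝓝 (ψ.φ (s : ℝ) w ω')) :=
    ((ψ.continuous_phi (s : ℝ) hs' ω').tendsto w).comp hconv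
  have hlim2 : Tendsto (fun j => ψ.φ (s : ℝ) (z (ι j)) ω') atTop (𝓝 y) := by
    have hsub : Tendsto (fun j => ι j + N) atTop atTop :=
      tendsto_atTop_mono (fun j => le_trans hι.le_apply (Nat.le_add_right _ _)) tendsto_id
    exact (hy.comp hsub).congr fun j => hkey (ι j)
  exact tendsto_nhds_unique hlim2 hlim1

theorem capture (hKc : IsCompactRandomSet K) (hg : Good ψ K x₀ ω)
    {u : ℕ → ℝ} (hu : Tendsto u atTop atTop) {n : ℕ} {x : ℕ → E}
    (hx : ∀ j, x j ∈ Metric.closedBall x₀ (n : ℝ)) {y : E}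
    (hy : Tendsto (fun j => ψ.φ (u j) (x j) (ψ.θ (-(u j)) ω)) atTop (𝓝 y)) :
    y ∈ AA ψ x₀ ω := by
  obtain ⟨c, hc⟩ := hg.2
  refine subset_closure (mem_iUnion.2 ⟨c, mem_iInter.2 fun m => ?_⟩)
  obtain ⟨k, hkm, hkc⟩ := hc m
  obtain ⟨w, hwK, hwy⟩ := capture_aux hKc hg hu hx hy (k : ℚ)
    (by exact_mod_cast Nat.zero_le k)
  have hcast : (((k : ℚ)) : ℝ) = (k : ℝ) := by push_cast; ring
  rw [hcast] at hwK hwy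
  refine subset_closure (mem_iUnion₂.2 ⟨k, hkm, ?_⟩)
  exact ⟨w, hkc hwK, hwy.symm⟩

theorem AA_nonempty (hKc : IsCompactRandomSet K) (hg : Good ψ K x₀ ω) :
    (AA ψ x₀ ω).Nonempty := by
  set z : ℕ → E := fun k => ψ.φ (k : ℝ) x₀ (ψ.θ (-(k : ℝ)) ω) with hz
  have hztend : Tendsto (fun k => EMetric.infEdist (z k) (K ω)) atTop (𝓝 0) := by
    have hcomp := (good_attr hg 0).comp
      (tendsto_natCast_atTop_atTop (R := ℝ))
    refine tendsto_of_tendsto_of_tendsto_of_le_of_le tendsto_const_nhds hcomp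
      (fun k => zero_le) fun k => ?_
    exact le_semiDist (Set.mem_image_of_mem _ (by simp))
  obtain ⟨w, hwK, ι, hι, hconv⟩ := exists_subseq_tendsto (hKc.1 ω) (hKc.2.1 ω) hztend
  refine ⟨w, subset_closure (mem_iUnion.2 ⟨0, mem_iInter.2 fun m => ?_⟩)⟩
  refine isClosed_closure.mem_of_tendsto hconv (eventually_atTop.2 ⟨m, fun j hj => ?_⟩)
  refine subset_closure (mem_iUnion₂.2 ⟨ι j, le_trans hj hι.le_apply, ?_⟩)
  exact ⟨x₀, by simp, rfl⟩

theorem infEdist_omegaC (hKc : IsCompactRandomSet K) (hg : Good ψ K x₀ ω) (c : ℕ) (x : E) :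
    EMetric.infEdist x (omegaC ψ x₀ c ω) = ⨆ m, EMetric.infEdist x (tailSet ψ x₀ c m ω) := by
  refine le_antisymm ?_ (iSup_le fun m => EMetric.infEdist_anti (iInter_subset _ m))
  set L := ⨆ m, EMetric.infEdist x (tailSet ψ x₀ c m ω) with hL
  by_cases hLtop : L = ⊤
  · rw [hLtop]; exact le_top
  have hym : ∀ m : ℕ, ∃ y ∈ tailSet ψ x₀ c m ω, edist x y < L + ((m + 1 : ℕ) : ℝ≥0∞)⁻¹ := by
    intro m
    refine EMetric.infEdist_lt_iff.1 (lt_of_le_of_lt (le_iSup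
      (fun m => EMetric.infEdist x (tailSet ψ x₀ c m ω)) m) ?_)
    exact ENNReal.lt_add_right hLtop (by simp)
  choose y hymem hyd using hym
  have hy0 : Tendsto (fun m => EMetric.infEdist (y m) (K ω)) atTop (𝓝 0) := by
    rw [ENNReal.tendsto_nhds_zero]
    intro δ hδ
    obtain ⟨M, hM⟩ := tail_near_K hg c hδ
    exact eventually_atTop.2 ⟨M, fun m hm => hM m hm _ (hymem m)⟩
  obtain ⟨w, hwK, ι, hι, hconv⟩ := exists_subseq_tendsto (hKc.1 ω) (hKc.2.1 ω) hy0
  have hwmem : w ∈ omegaC ψ x₀ c ω := by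
    refine mem_iInter.2 fun m => ?_
    refine isClosed_closure.mem_of_tendsto hconv (eventually_atTop.2 ⟨m, fun j hj => ?_⟩)
    exact tailSet_anti (le_trans hj hι.le_apply) c (hymem (ι j))
  have hlim1 : Tendsto (fun j => edist x (y (ι j))) atTop (𝓝 (edist x w)) := by
    have hcont : Continuous fun e : E => edist x e := continuous_const.edist continuous_id
    exact (hcont.tendsto w).comp hconv
  have hlim2 : Tendsto (fun j => L + ((ι j + 1 : ℕ) : ℝ≥0∞)⁻¹) atTop (𝓝 L) := by
    have h2 : Tendsto (fun j => ((ι j + 1 : ℕ) : ℝ≥0∞)⁻¹) atTop (𝓝 0) :=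
      inv_nat_succ_tendsto.comp hι.tendsto_atTop
    simpa using (tendsto_const_nhds (α := ℕ) (f := atTop) (x := L)).add h2
  have hfin : edist x w ≤ L :=
    le_of_tendsto_of_tendsto' hlim1 hlim2 fun j => (hyd (ι j)).le
  exact le_trans (EMetric.infEdist_le_edist_of_mem hwmem) hfin

theorem attract (hKc : IsCompactRandomSet K) (hg : Good ψ K x₀ ω) (n : ℕ) :
    Tendsto (fun t : ℝ => semiDist
      ((fun x => ψ.φ t x (ψ.θ (-t) ω)) '' Metric.closedBall x₀ (n : ℝ)) (AA ψ x₀ ω))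
      atTop (𝓝 0) := by
  rw [ENNReal.tendsto_nhds_zero]
  by_contra hcon
  push_neg at hcon
  obtain ⟨ε, hε, hfreq⟩ := hcon
  have hfreq' : ∀ a : ℝ, ∃ b ≥ a, ε < semiDist
      ((fun x => ψ.φ b x (ψ.θ (-b) ω)) '' Metric.closedBall x₀ (n : ℝ)) (AA ψ x₀ ω) := by
    intro a
    obtain ⟨b, hba, hb⟩ := frequently_atTop.1 hfreq a
    exact ⟨b, hba, hb⟩
  have hsel : ∀ j : ℕ, ∃ t : ℝ, (j : ℝ) ≤ t ∧ ∃ xx ∈ Metric.closedBall x₀ (n : ℝ),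
      ε < EMetric.infEdist (ψ.φ t xx (ψ.θ (-t) ω)) (AA ψ x₀ ω) := by
    intro j
    obtain ⟨b, hba, hb⟩ := hfreq' (j : ℝ)
    rw [semiDist] at hb
    obtain ⟨p, hp⟩ := lt_iSup_iff.1 hb
    obtain ⟨hpmem, hplt⟩ := lt_iSup_iff.1 hp
    obtain ⟨xx, hxx, hxxp⟩ := hpmem
    exact ⟨b, hba, xx, hxx, by rw [show ψ.φ b xx (ψ.θ (-b) ω) = p from hxxp]; exact hplt⟩
  choose t ht xs hxs hεs using hsel
  have htt : Tendsto t atTop atTop :=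
    tendsto_atTop_mono ht tendsto_natCast_atTop_atTop
  set z : ℕ → E := fun j => ψ.φ (t j) (xs j) (ψ.θ (-(t j)) ω) with hzdef
  have hz0 : Tendsto (fun j => EMetric.infEdist (z j) (K ω)) atTop (𝓝 0) := by
    have hcomp := (good_attr hg n).comp htt
    refine tendsto_of_tendsto_of_tendsto_of_le_of_le tendsto_const_nhds hcomp
      (fun j => zero_le) fun j => ?_
    exact le_semiDist (Set.mem_image_of_mem _ (hxs j))
  obtain ⟨w, hwK, ι, hι, hconv⟩ := exists_subseq_tendsto (hKc.1 ω) (hKc.2.1 ω) hz0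
  have hwAA : w ∈ AA ψ x₀ ω :=
    capture hKc hg (htt.comp hι.tendsto_atTop) (fun j => hxs (ι j)) hconv
  have hεw : ε ≤ EMetric.infEdist w (AA ψ x₀ ω) := by
    have hcont := (EMetric.continuous_infEdist (s := AA ψ x₀ ω)).tendsto w
    exact ge_of_tendsto (hcont.comp hconv) (Eventually.of_forall fun j => (hεs (ι j)).le)
  rw [show EMetric.infEdist w (AA ψ x₀ ω) = 0 from EMetric.infEdist_zero_of_mem hwAA] at hεw
  exact absurd hεw (by simpa using hε.ne')

end RDSA

end Part3

section Part4

variable {E Ω : Type*} [MetricSpace E] [MeasurableSpace E] [MeasurableSpace Ω] {P : Measure Ω}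

namespace RDSA

variable {ψ : ContinuousRDS E Ω P} {K : Ω → Set E} {x₀ : E} {ω : Ω}

theorem invariance (hKc : IsCompactRandomSet K) {t : ℝ} (ht : 0 ≤ t)
    (hg : Good ψ K x₀ ω) (hg' : Good ψ K x₀ (ψ.θ t ω)) :
    (fun x => ψ.φ t x ω) '' AA ψ x₀ ω = AA ψ x₀ (ψ.θ t ω) := by
  have hcont := ψ.continuous_phi t ht ω
  apply Set.Subset.antisymm
  · have sub1 : ∀ c : ℕ, (fun x => ψ.φ t x ω) '' omegaC ψ x₀ c ω ⊆ AA ψ x₀ (ψ.θ t ω) := by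
      intro c
      rintro _ ⟨y, hy, rfl⟩
      have happrox : ∀ j : ℕ, ∃ k, j ≤ k ∧ ∃ xx ∈ Metric.closedBall x₀ (c : ℝ),
          edist y (ψ.φ (k : ℝ) xx (ψ.θ (-(k : ℝ)) ω)) < ((j + 1 : ℕ) : ℝ≥0∞)⁻¹ := by
        intro j
        have hyj : y ∈ tailSet ψ x₀ c j ω := mem_iInter.1 hy j
        obtain ⟨q, hq, hqd⟩ := EMetric.mem_closure_iff.1 hyj _
          (by simp : (0 : ℝ≥0∞) < ((j + 1 : ℕ) : ℝ≥0∞)⁻¹)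
        obtain ⟨k, hk, hqmem⟩ := mem_iUnion₂.1 hq
        obtain ⟨xx, hxx, hxq⟩ := hqmem
        exact ⟨k, hk, xx, hxx, by
          rw [show ψ.φ (k : ℝ) xx (ψ.θ (-(k : ℝ)) ω) = q from hxq]; exact hqd⟩
      choose k hk xx hxx hd using happrox
      have hp : Tendsto (fun j => ψ.φ ((k j : ℕ) : ℝ) (xx j) (ψ.θ (-((k j : ℕ) : ℝ)) ω))
          atTop (𝓝 y) := tendsto_of_edist_le (fun j => (hd j).le) inv_nat_succ_tendsto
      have hφt := (hcont.tendsto y).comp hp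
      have hkey : ∀ j, ψ.φ t (ψ.φ ((k j : ℕ) : ℝ) (xx j) (ψ.θ (-((k j : ℕ) : ℝ)) ω)) ω
          = ψ.φ (t + (k j : ℝ)) (xx j) (ψ.θ (-(t + (k j : ℝ))) (ψ.θ t ω)) := by
        intro j
        have hc := ψ.cocycle ((k j : ℕ) : ℝ) t (Nat.cast_nonneg _) ht (xx j)
          (ψ.θ (-((k j : ℕ) : ℝ)) ω)
        have h1 : ψ.θ ((k j : ℕ) : ℝ) (ψ.θ (-((k j : ℕ) : ℝ)) ω) = ω := by
          rw [theta_comp]; simp [ψ.theta_zero]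
        rw [h1] at hc
        have h2 : ψ.θ (-(t + ((k j : ℕ) : ℝ))) (ψ.θ t ω) = ψ.θ (-((k j : ℕ) : ℝ)) ω := by
          rw [theta_comp]; congr 1; ring
        rw [h2, ← hc]
      have hφt' : Tendsto (fun j => ψ.φ (t + (k j : ℝ)) (xx j)
          (ψ.θ (-(t + (k j : ℝ))) (ψ.θ t ω))) atTop (𝓝 (ψ.φ t y ω)) :=
        hφt.congr fun j => hkey j
      refine capture hKc hg' (u := fun j => t + (k j : ℝ)) ?_ hxx hφt'
      have hkj : Tendsto (fun j => ((k j : ℕ) : ℝ)) atTop atTop :=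
        tendsto_natCast_atTop_atTop.comp (tendsto_atTop_mono hk tendsto_id)
      exact tendsto_atTop_add_const_left atTop t hkj
    calc (fun x => ψ.φ t x ω) '' AA ψ x₀ ω
        ⊆ closure ((fun x => ψ.φ t x ω) '' ⋃ c, omegaC ψ x₀ c ω) :=
          image_closure_subset_closure_image hcont
      _ ⊆ closure (AA ψ x₀ (ψ.θ t ω)) := closure_mono (by
          rw [Set.image_iUnion]; exact iUnion_subset sub1)
      _ = AA ψ x₀ (ψ.θ t ω) := isClosed_closure.closure_eq
  · have himg : IsCompact ((fun x => ψ.φ t x ω) '' AA ψ x₀ ω) :=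
      (AA_compact hKc hg).image hcont
    have sub2 : ∀ c : ℕ, omegaC ψ x₀ c (ψ.θ t ω) ⊆ (fun x => ψ.φ t x ω) '' AA ψ x₀ ω := by
      intro c y' hy'
      set N₀ : ℕ := ⌈t⌉₊ with hN₀
      have happrox : ∀ j : ℕ, ∃ kk, j + N₀ ≤ kk ∧ ∃ xx ∈ Metric.closedBall x₀ (c : ℝ),
          edist y' (ψ.φ (kk : ℝ) xx (ψ.θ (-(kk : ℝ)) (ψ.θ t ω))) < ((j + 1 : ℕ) : ℝ≥0∞)⁻¹ := by
        intro j
        have hyj : y' ∈ tailSet ψ x₀ c (j + N₀) (ψ.θ t ω) := mem_iInter.1 hy' (j + N₀)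
        obtain ⟨q, hq, hqd⟩ := EMetric.mem_closure_iff.1 hyj _
          (by simp : (0 : ℝ≥0∞) < ((j + 1 : ℕ) : ℝ≥0∞)⁻¹)
        obtain ⟨kk, hkk, hqmem⟩ := mem_iUnion₂.1 hq
        obtain ⟨xx, hxx, hxq⟩ := hqmem
        exact ⟨kk, hkk, xx, hxx, by
          rw [show ψ.φ (kk : ℝ) xx (ψ.θ (-(kk : ℝ)) (ψ.θ t ω)) = q from hxq]; exact hqd⟩
      choose k hk xx hxx hd using happrox
      have hkt : ∀ j, t ≤ ((k j : ℕ) : ℝ) := by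
        intro j
        calc t ≤ (N₀ : ℝ) := Nat.le_ceil t
        _ ≤ ((j + N₀ : ℕ) : ℝ) := by exact_mod_cast Nat.le_add_left _ _
        _ ≤ ((k j : ℕ) : ℝ) := by exact_mod_cast hk j
      have hkj : Tendsto (fun j => ((k j : ℕ) : ℝ)) atTop atTop :=
        tendsto_natCast_atTop_atTop.comp
          (tendsto_atTop_mono (fun j => le_trans (Nat.le_add_right j N₀) (hk j)) tendsto_id)
      have hkjt : Tendsto (fun j => ((k j : ℕ) : ℝ) - t) atTop atTop := by
        simpa [sub_eq_add_neg] using tendsto_atTop_add_const_right atTop (-t) hkj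
      set v : ℕ → E := fun j =>
        ψ.φ (((k j : ℕ) : ℝ) - t) (xx j) (ψ.θ (-(((k j : ℕ) : ℝ) - t)) ω) with hvdef
      have hkey : ∀ j, ψ.φ ((k j : ℕ) : ℝ) (xx j) (ψ.θ (-((k j : ℕ) : ℝ)) (ψ.θ t ω))
          = ψ.φ t (v j) ω := by
        intro j
        have hc := ψ.cocycle (((k j : ℕ) : ℝ) - t) t (by linarith [hkt j]) ht (xx j)
          (ψ.θ (-(((k j : ℕ) : ℝ) - t)) ω)
        rw [show t + (((k j : ℕ) : ℝ) - t) = ((k j : ℕ) : ℝ) from by ring] at hc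
        have h1 : ψ.θ (((k j : ℕ) : ℝ) - t) (ψ.θ (-(((k j : ℕ) : ℝ) - t)) ω) = ω := by
          rw [theta_comp]; simp [ψ.theta_zero]
        have h2 : ψ.θ (-((k j : ℕ) : ℝ)) (ψ.θ t ω) = ψ.θ (-(((k j : ℕ) : ℝ) - t)) ω := by
          rw [theta_comp]; congr 1; ring
        rw [h2, hc, h1]
      have hvtend : Tendsto (fun j => EMetric.infEdist (v j) (K ω)) atTop (𝓝 0) := by
        have hcomp := (good_attr hg c).comp hkjt
        refine tendsto_of_tendsto_of_tendsto_of_le_of_le tendsto_const_nhds hcomp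
          (fun j => zero_le) fun j => ?_
        exact le_semiDist (Set.mem_image_of_mem _ (hxx j))
      obtain ⟨w, hwK, ι, hι, hconv⟩ := exists_subseq_tendsto (hKc.1 ω) (hKc.2.1 ω) hvtend
      have hwAA : w ∈ AA ψ x₀ ω :=
        capture hKc hg (u := fun j => ((k (ι j) : ℕ) : ℝ) - t)
          (hkjt.comp hι.tendsto_atTop) (fun j => hxx (ι j)) hconv
      have hlimA : Tendsto (fun j => ψ.φ t (v (ι j)) ω) atTop (𝓝 (ψ.φ t w ω)) :=
        (hcont.tendsto w).comp hconv
      have hp : Tendsto (fun j => ψ.φ ((k j : ℕ) : ℝ) (xx j)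
          (ψ.θ (-((k j : ℕ) : ℝ)) (ψ.θ t ω))) atTop (𝓝 y') :=
        tendsto_of_edist_le (fun j => (hd j).le) inv_nat_succ_tendsto
      have hlimB : Tendsto (fun j => ψ.φ t (v (ι j)) ω) atTop (𝓝 y') :=
        (hp.comp hι.tendsto_atTop).congr fun j => hkey (ι j)
      exact ⟨w, hwAA, (tendsto_nhds_unique hlimB hlimA).symm⟩
    exact closure_minimal (iUnion_subset sub2) himg.isClosed

end RDSA

end Part4

section Part5

variable {E Ω : Type*} [MetricSpace E] [MeasurableSpace E] [MeasurableSpace Ω] {P : Measure Ω}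

namespace RDSA

variable {ψ : ContinuousRDS E Ω P} {K : Ω → Set E} {x₀ : E} {ω : Ω}

theorem exists_dense_in_closedBall [SecondCountableTopology E] (x₀ : E) (c : ℕ) :
    ∃ D : Set E, D.Countable ∧ D ⊆ Metric.closedBall x₀ (c : ℝ) ∧
      Metric.closedBall x₀ (c : ℝ) ⊆ closure D := by
  obtain ⟨D₀, hD₀c, hD₀d⟩ :=
    TopologicalSpace.exists_countable_dense (Metric.closedBall x₀ (c : ℝ))
  refine ⟨Subtype.val '' D₀, hD₀c.image _, ?_, ?_⟩
  · rintro _ ⟨z, _, rfl⟩; exact z.2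
  · intro b hb
    have h1 : (⟨b, hb⟩ : Metric.closedBall x₀ (c : ℝ)) ∈ closure D₀ := hD₀d _
  -- Dense means ∀ x, x ∈ closure D₀
    have h2 := map_mem_closure continuous_subtype_val h1 (Set.mapsTo_image _ _)
    simpa using h2

theorem infEdist_image_dense {f : E → E} (hf : Continuous f) {S D : Set E}
    (hD : D ⊆ S) (hSD : S ⊆ closure D) (x : E) :
    EMetric.infEdist x (f '' S) = ⨅ b : D, edist x (f b) := by
  apply le_antisymm
  · exact le_iInf fun b => EMetric.infEdist_le_edist_of_mem ⟨b, hD b.2, rfl⟩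
  · have h1 : f '' S ⊆ closure (f '' D) :=
      (Set.image_mono (f := f) hSD).trans (image_closure_subset_closure_image hf)
    refine le_trans ?_ (EMetric.infEdist_anti h1)
    rw [EMetric.infEdist_closure]
    refine EMetric.le_infEdist.2 ?_
    rintro _ ⟨b₀, hb₀, rfl⟩
    exact iInf_le (fun b : D => edist x (f (b : E))) ⟨b₀, hb₀⟩

theorem measurableSet_hit [SecondCountableTopology E] [Nonempty E]
    (hKc : IsCompactRandomSet K) {U : Set E} (hU : IsOpen U) :
    MeasurableSet {ω | (K ω ∩ U).Nonempty} := by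
  obtain ⟨q, hq⟩ := TopologicalSpace.exists_dense_seq E
  have heq : {ω | (K ω ∩ U).Nonempty} =
      ⋃ (i : ℕ) (r : ℚ) (_ : 0 < (r : ℝ)) (_ : Metric.ball (q i) (r : ℝ) ⊆ U),
        {ω | infDist (q i) (K ω) < (r : ℝ)} := by
    ext ω
    simp only [Set.mem_iUnion, Set.mem_setOf_eq]
    constructor
    · rintro ⟨y, hyK, hyU⟩
      obtain ⟨ε, hε, hball⟩ := Metric.isOpen_iff.1 hU y hyU
      obtain ⟨i, hi⟩ := hq.exists_dist_lt y (by positivity : (0 : ℝ) < ε / 3)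
      obtain ⟨r, hr1, hr2⟩ := exists_rat_btwn (show ε / 3 < 2 * ε / 3 by linarith)
      refine ⟨i, r, by
          have := dist_nonneg (x := y) (y := q i); linarith, ?_, ?_⟩
      · intro z hz
        apply hball
        rw [Metric.mem_ball] at hz ⊢
        have hdy : dist (q i) y < ε / 3 := by rw [dist_comm]; exact hi
        calc dist z y ≤ dist z (q i) + dist (q i) y := dist_triangle _ _ _
        _ < (r : ℝ) + ε / 3 := add_lt_add hz hdy
        _ ≤ 2 * ε / 3 + ε / 3 := by linarith
        _ = ε := by ring
      · calc infDist (q i) (K ω) ≤ dist (q i) y := Metric.infDist_le_dist_of_mem hyK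
        _ < ε / 3 := by rw [dist_comm]; exact hi
        _ < r := hr1
    · rintro ⟨i, r, hr0, hsub, hinf⟩
      obtain ⟨y, hyK, hy⟩ := (Metric.infDist_lt_iff (hKc.2.1 ω)).1 hinf
      exact ⟨y, hyK, hsub (by rwa [Metric.mem_ball, dist_comm])⟩
  rw [heq]
  refine MeasurableSet.iUnion fun i => MeasurableSet.iUnion fun r =>
    MeasurableSet.iUnion fun _ => MeasurableSet.iUnion fun _ => ?_
  exact measurableSet_lt (hKc.2.2 (q i)) measurable_const

theorem measurableSet_K_subset [SecondCountableTopology E] [Nonempty E]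
    (hKc : IsCompactRandomSet K) (x₀ : E) (c : ℕ) :
    MeasurableSet {ω | K ω ⊆ Metric.closedBall x₀ (c : ℝ)} := by
  have h := (measurableSet_hit hKc
    (Metric.isClosed_closedBall (x := x₀) (ε := (c : ℝ))).isOpen_compl).compl
  convert h using 1
  ext ω
  simp only [Set.mem_setOf_eq, Set.mem_compl_iff, Set.inter_compl_nonempty_iff, not_not]

theorem iterate_theta (ψ : ContinuousRDS E Ω P) (k : ℕ) (ω : Ω) :
    (ψ.θ (-1))^[k] ω = ψ.θ (-(k : ℝ)) ω := by
  induction k with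
  | zero => simp [ψ.theta_zero]
  | succ m ih =>
    rw [Function.iterate_succ_apply', ih, theta_comp]
    congr 1
    push_cast; ring

end RDSA

end Part5

section Part6

variable {E Ω : Type*} [MetricSpace E] [MeasurableSpace E] [MeasurableSpace Ω] {P : Measure Ω}

namespace RDSA

variable {ψ : ContinuousRDS E Ω P} {K : Ω → Set E}

theorem good_ae [IsProbabilityMeasure P] [SecondCountableTopology E]
    (hKc : IsCompactRandomSet K)
    (hattr : ∀ B : Set E, Bornology.IsBounded B → StronglyAttracts ψ K B) (x₀ : E) :
    ∀ᵐ ω ∂P, Good ψ K x₀ ω := by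
  haveI : Nonempty E := ⟨x₀⟩
  have hpart1 : ∀ᵐ ω ∂P, ∀ n : ℕ, ∀ s : ℚ, 0 ≤ s →
      Tendsto (fun u : ℝ => semiDist
        ((fun x => ψ.φ u x (ψ.θ (-u) (ψ.θ (-(s : ℝ)) ω))) '' Metric.closedBall x₀ (n : ℝ))
        (K (ψ.θ (-(s : ℝ)) ω))) atTop (𝓝 0) := by
    rw [MeasureTheory.ae_all_iff]
    intro n
    rw [MeasureTheory.ae_all_iff]
    intro s
    by_cases hs : 0 ≤ s
    · have hb := hattr (Metric.closedBall x₀ (n : ℝ)) Metric.isBounded_closedBall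
      have hmeas : AEMeasurable (ψ.θ (-(s : ℝ))) P :=
        (ψ.measurable_theta.comp (measurable_const.prodMk measurable_id)).aemeasurable
      have hmap : P.map (ψ.θ (-(s : ℝ))) = P := (ψ.measurePreserving_theta (-(s : ℝ))).map_eq
      have hres := MeasureTheory.ae_of_ae_map hmeas (p := fun ω' =>
        Tendsto (fun u : ℝ => semiDist
          ((fun x => ψ.φ u x (ψ.θ (-u) ω')) '' Metric.closedBall x₀ (n : ℝ))
          (K ω')) atTop (𝓝 0)) (by rw [hmap]; exact hb)
      filter_upwards [hres] with ω h _
      exact h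
    · filter_upwards with ω hs'
      exact absurd hs' hs
  have hpart2 : ∀ᵐ ω ∂P, ∃ c : ℕ, ∀ m : ℕ, ∃ k, m ≤ k ∧
      K (ψ.θ (-(k : ℝ)) ω) ⊆ Metric.closedBall x₀ (c : ℝ) := by
    have hcons : MeasureTheory.Conservative (ψ.θ (-1)) P :=
      (ψ.measurePreserving_theta (-1)).conservative
    have hrec : ∀ᵐ ω ∂P, ∀ c : ℕ, ω ∈ {ω' | K ω' ⊆ Metric.closedBall x₀ (c : ℝ)} →
        ∃ᶠ k in atTop, (ψ.θ (-1))^[k] ω ∈ {ω' | K ω' ⊆ Metric.closedBall x₀ (c : ℝ)} := by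
      rw [MeasureTheory.ae_all_iff]
      intro c
      exact hcons.ae_mem_imp_frequently_image_mem
        (measurableSet_K_subset hKc x₀ c).nullMeasurableSet
    filter_upwards [hrec] with ω h
    obtain ⟨r, hr⟩ := (hKc.1 ω).isBounded.subset_closedBall x₀
    set c : ℕ := ⌈max r 0⌉₊ with hc
    have hmem : ω ∈ {ω' | K ω' ⊆ Metric.closedBall x₀ (c : ℝ)} := by
      refine hr.trans (Metric.closedBall_subset_closedBall ?_)
      calc r ≤ max r 0 := le_max_left _ _
      _ ≤ ((⌈max r 0⌉₊ : ℕ) : ℝ) := Nat.le_ceil _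
    refine ⟨c, fun m => ?_⟩
    obtain ⟨k, hkm, hk⟩ := frequently_atTop.1 (h c hmem) m
    rw [iterate_theta] at hk
    exact ⟨k, hkm, hk⟩
  filter_upwards [hpart1, hpart2] with ω h1 h2
  exact ⟨h1, h2⟩

end RDSA

end Part6

/-- If there is a compact random set `K` strongly attracting every bounded subset of `E`,
then `φ` has a strong `B`-attractor. -/
theorem strongB_attractor_of_strongly_attracting_set
    [CompleteSpace E] [SecondCountableTopology E] [BorelSpace E] [IsProbabilityMeasure P]
    (ψ : ContinuousRDS E Ω P) (K : Ω → Set E) (hK : IsCompactRandomSet K)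
    (hattr : ∀ B : Set E, Bornology.IsBounded B → StronglyAttracts ψ K B) :
    ∃ A : Ω → Set E, IsStrongAttractor ψ {B : Set E | Bornology.IsBounded B} A := by
  classical
  have hΩ : Nonempty Ω := by
    by_contra h
    rw [not_nonempty_iff] at h
    have h1 : P univ = 1 := measure_univ
    rw [Set.univ_eq_empty_iff.2 h, measure_empty] at h1
    exact zero_ne_one h1
  obtain ⟨ω₀⟩ := hΩ
  obtain ⟨x₀, -⟩ := hK.2.1 ω₀
  have hGood := RDSA.good_ae hK hattr x₀
  set Gb := {ω | ¬ RDSA.Good ψ K x₀ ω} with hGbdef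
  have hGb0 : P Gb = 0 := (MeasureTheory.ae_iff).1 hGood
  set G := (toMeasurable P Gb)ᶜ with hGdef
  have hGm : MeasurableSet G := (measurableSet_toMeasurable P Gb).compl
  have hGgood : ∀ ω ∈ G, RDSA.Good ψ K x₀ ω := by
    intro ω hω
    by_contra hbad
    exact hω (subset_toMeasurable P Gb hbad)
  have hGc0 : P Gᶜ = 0 := by
    rw [hGdef, compl_compl, measure_toMeasurable]; exact hGb0
  have hGfull : ∀ᵐ ω ∂P, ω ∈ G := by
    rw [MeasureTheory.ae_iff]
    have : {ω | ¬ ω ∈ G} = Gᶜ := rfl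
    rw [this]; exact hGc0
  choose D hDc hDs hDd using fun c : ℕ => RDSA.exists_dense_in_closedBall x₀ c
  set A : Ω → Set E := fun ω => if ω ∈ G then RDSA.AA ψ x₀ ω else K ω with hAdef
  have hAG : ∀ ω ∈ G, A ω = RDSA.AA ψ x₀ ω := fun ω hω => if_pos hω
  have hAG' : ∀ ω ∉ G, A ω = K ω := fun ω hω => if_neg hω
  refine ⟨A, ⟨?_, ?_, ?_⟩, ?_, ?_⟩
  · intro ω
    by_cases hω : ω ∈ G
    · rw [hAG ω hω]; exact RDSA.AA_compact hK (hGgood ω hω)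
    · rw [hAG' ω hω]; exact hK.1 ω
  · intro ω
    by_cases hω : ω ∈ G
    · rw [hAG ω hω]; exact RDSA.AA_nonempty hK (hGgood ω hω)
    · rw [hAG' ω hω]; exact hK.2.1 ω
  · intro x
    haveI : ∀ c : ℕ, Countable (D c) := fun c => (hDc c).to_subtype
    set F : Ω → ENNReal := fun ω => if ω ∈ G then
        (⨅ c : ℕ, ⨆ m : ℕ, ⨅ k : ℕ, ⨅ (_ : m ≤ k), ⨅ b : (D c),
          edist x (ψ.φ (k : ℝ) (b : E) (ψ.θ (-(k : ℝ)) ω)))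
      else EMetric.infEdist x (K ω) with hFdef
    have hFmeas : Measurable F := by
      refine Measurable.ite hGm ?_ ?_
      · refine Measurable.iInf fun c => ?_
        refine Measurable.iSup fun m => ?_
        refine Measurable.iInf fun k => ?_
        refine Measurable.iInf fun _ => ?_
        refine Measurable.iInf fun b => ?_
        have hθ : Measurable (ψ.θ (-(k : ℝ))) :=
          ψ.measurable_theta.comp (measurable_const.prodMk measurable_id)
        have hφm : Measurable fun ω => ψ.φ (k : ℝ) (b : E) (ψ.θ (-(k : ℝ)) ω) :=
          ψ.measurable_phi.comp (measurable_const.prodMk (measurable_const.prodMk hθ))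
        exact measurable_const.edist hφm
      · have heq : (fun ω => EMetric.infEdist x (K ω)) =
            fun ω => ENNReal.ofReal (infDist x (K ω)) := by
          funext ω
          rw [Metric.infDist, ENNReal.ofReal_toReal (Metric.infEdist_ne_top (hK.2.1 ω))]; rfl
        rw [heq]
        exact (hK.2.2 x).ennreal_ofReal
    have hE : ∀ (y : E) (S : Set E), EMetric.infEdist y S = Metric.infEDist y S := fun _ _ => rfl
    have hFA : ∀ ω, EMetric.infEdist x (A ω) = F ω := by
      intro ω
      by_cases hω : ω ∈ G
      · rw [hAG ω hω, hFdef]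
        simp only [if_pos hω]
        rw [RDSA.AA, hE, EMetric.infEdist_closure, EMetric.infEdist_iUnion]
        refine iInf_congr fun c => ?_
        rw [← hE, RDSA.infEdist_omegaC hK (hGgood ω hω) c x]
        refine iSup_congr fun m => ?_
        rw [RDSA.tailSet, hE, EMetric.infEdist_closure, EMetric.infEdist_iUnion]
        refine iInf_congr fun k => ?_
        rw [EMetric.infEdist_iUnion]
        refine iInf_congr fun hmk => ?_
        exact RDSA.infEdist_image_dense (ψ.continuous_phi (k : ℝ) (Nat.cast_nonneg k) _)
          (hDs c) (hDd c) x
      · rw [hAG' ω hω, hFdef]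
        simp only [if_neg hω]
    have hrw : (fun ω => infDist x (A ω)) = fun ω => (F ω).toReal := by
      funext ω; rw [Metric.infDist, ← hE, hFA ω]
    rw [hrw]
    exact hFmeas.ennreal_toReal
  · intro t ht
    have hpre : ∀ᵐ ω ∂P, ψ.θ t ω ∈ G := by
      rw [MeasureTheory.ae_iff]
      have hpeq : {ω | ¬ ψ.θ t ω ∈ G} = (ψ.θ t) ⁻¹' Gᶜ := rfl
      rw [hpeq, (ψ.measurePreserving_theta t).measure_preimage hGm.compl.nullMeasurableSet]
      exact hGc0
    filter_upwards [hGfull, hpre] with ω h1 h2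
    rw [hAG ω h1, hAG _ h2]
    exact RDSA.invariance hK ht (hGgood ω h1) (hGgood _ h2)
  · intro B hB
    obtain ⟨r, hr⟩ := hB.subset_closedBall x₀
    set n : ℕ := ⌈max r 0⌉₊ with hn
    have hBn : B ⊆ Metric.closedBall x₀ (n : ℝ) := by
      refine hr.trans (Metric.closedBall_subset_closedBall ?_)
      calc r ≤ max r 0 := le_max_left _ _
      _ ≤ ((⌈max r 0⌉₊ : ℕ) : ℝ) := Nat.le_ceil _
    filter_upwards [hGfull] with ω hω
    rw [hAG ω hω]
    have hmain := RDSA.attract hK (hGgood ω hω) n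
    refine tendsto_of_tendsto_of_tendsto_of_le_of_le tendsto_const_nhds hmain
      (fun t => zero_le) fun t => ?_
    exact RDSA.semiDist_mono (Set.image_mono hBn)
end
end

section
/- Let φ be a continuous RDS on a Polish space E over an MDS (Ω,𝓕,P,(ϑ_t)). If φ has a strong C-attractor, then for every ε>0 there exists a compact subset C_ε of E such that for each δ>0 and each compact subset K of E one has P{K ⊆ ⋃_{s≥0} ⋂_{t≥s} φ(t,ϑ_{-t}ω)^{-1}(C_ε^δ)} ≥ 1−ε. -/
open MeasureTheory Set Filter Topology Metric

noncomputable section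

variable {E Ω : Type*} [MetricSpace E] [MeasurableSpace E] [MeasurableSpace Ω] {P : Measure Ω}

set_option linter.unusedSectionVars false in
lemma crs_hit_open [SecondCountableTopology E] [Nonempty E] {A : Ω → Set E}
    (hA : IsCompactRandomSet A) {U : Set E} (hU : IsOpen U) :
    MeasurableSet {ω | (A ω ∩ U).Nonempty} := by
  obtain ⟨u, hu⟩ := TopologicalSpace.exists_dense_seq E
  have key : {ω | (A ω ∩ U).Nonempty} =
      ⋃ (n : ℕ) (q : ℚ) (_ : 0 < (q:ℝ) ∧ Metric.ball (u n) (q:ℝ) ⊆ U),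
        {ω | infDist (u n) (A ω) < (q:ℝ)} := by
    ext ω
    simp only [mem_iUnion, mem_setOf_eq]
    constructor
    · rintro ⟨a, haA, haU⟩
      obtain ⟨r, hr, hball⟩ := Metric.isOpen_iff.1 hU a haU
      obtain ⟨q, hq0, hqr⟩ := exists_rat_btwn (by linarith : (0:ℝ) < r / 2)
      obtain ⟨n, hn⟩ := Metric.denseRange_iff.1 hu a ((q:ℝ) / 2)
        (by positivity)
      have hn' : dist (u n) a < (q:ℝ) / 2 := by rw [dist_comm]; exact hn
      refine ⟨n, q, ⟨hq0, ?_⟩, ?_⟩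
      · intro y hy
        apply hball
        rw [Metric.mem_ball] at hy ⊢
        calc dist y a ≤ dist y (u n) + dist (u n) a := dist_triangle _ _ _
          _ < q + q / 2 := by linarith
          _ < r := by linarith
      · calc infDist (u n) (A ω) ≤ dist (u n) a := infDist_le_dist_of_mem haA
          _ < (q:ℝ) := by linarith
    · rintro ⟨n, q, ⟨hq0, hball⟩, hd⟩
      obtain ⟨a, haA, ha⟩ := (Metric.infDist_lt_iff (hA.2.1 ω)).1 hd
      exact ⟨a, haA, hball (by rwa [Metric.mem_ball, dist_comm])⟩
  rw [key]
  refine MeasurableSet.iUnion fun n => MeasurableSet.iUnion fun q =>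
    MeasurableSet.iUnion fun _ => ?_
  exact measurableSet_lt (hA.2.2 (u n)) measurable_const

lemma crs_subset_closed [SecondCountableTopology E] [Nonempty E] {A : Ω → Set E}
    (hA : IsCompactRandomSet A) {F : Set E} (hF : IsClosed F) :
    MeasurableSet {ω | A ω ⊆ F} := by
  have : {ω | A ω ⊆ F} = {ω | (A ω ∩ Fᶜ).Nonempty}ᶜ := by
    ext ω
    simp only [mem_compl_iff, mem_setOf_eq, not_nonempty_iff_eq_empty,
      ← disjoint_compl_right_iff_subset]
    rw [Set.disjoint_iff_inter_eq_empty]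
  rw [this]
  exact (crs_hit_open hA hF.isOpen_compl).compl

lemma crs_tight [CompleteSpace E] [SecondCountableTopology E] [Nonempty E]
    [IsProbabilityMeasure P] {A : Ω → Set E} (hA : IsCompactRandomSet A)
    {ε : ℝ} (hε : 0 < ε) :
    ∃ C : Set E, IsCompact C ∧ ∃ T : Set Ω, MeasurableSet T ∧
      ENNReal.ofReal (1 - ε) ≤ P T ∧ ∀ ω ∈ T, A ω ⊆ C := by
  obtain ⟨u, hu⟩ := TopologicalSpace.exists_dense_seq E
  set r : ℕ → ℝ := fun k => (k + 1 : ℝ)⁻¹ with hr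
  have hrpos : ∀ k, 0 < r k := fun k => by positivity
  set F : ℕ → ℕ → Set E := fun k N => ⋃ n ∈ Finset.range N, Metric.closedBall (u n) (r k)
    with hF
  have hFclosed : ∀ k N, IsClosed (F k N) := fun k N =>
    (Finset.range N).finite_toSet.isClosed_biUnion fun n _ => Metric.isClosed_closedBall
  set Ev : ℕ → ℕ → Set Ω := fun k N => {ω | A ω ⊆ F k N} with hEv
  have hEvMeas : ∀ k N, MeasurableSet (Ev k N) := fun k N =>
    crs_subset_closed hA (hFclosed k N)
  have hEvMono : ∀ k, Monotone (Ev k) := by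
    intro k N M hNM ω hω
    exact hω.trans (Set.biUnion_subset_biUnion_left (Finset.range_subset_range.2 hNM))
  have hEvUnion : ∀ k, (⋃ N, Ev k N) = univ := by
    intro k
    ext ω
    simp only [mem_iUnion, mem_univ, iff_true]
    have hcover : A ω ⊆ ⋃ n : ℕ, Metric.ball (u n) (r k) := by
      intro x _
      obtain ⟨n, hn⟩ := Metric.denseRange_iff.1 hu x (r k) (hrpos k)
      exact mem_iUnion.2 ⟨n, by rwa [Metric.mem_ball]⟩
    obtain ⟨s, hs⟩ := (hA.1 ω).elim_finite_subcover
      (fun n => Metric.ball (u n) (r k)) (fun n => Metric.isOpen_ball) hcover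
    refine ⟨s.sup id + 1, hs.trans ?_⟩
    intro x hx
    obtain ⟨n, hn, hxn⟩ := mem_iUnion₂.1 hx
    refine mem_iUnion₂.2 ⟨n, Finset.mem_range.2 ?_, Metric.ball_subset_closedBall hxn⟩
    exact Nat.lt_succ_of_le (Finset.le_sup (f := id) hn)
  obtain ⟨c, hcpos, hcsum⟩ := ENNReal.exists_pos_sum_of_countable
    (ENNReal.ofReal_pos.2 hε).ne' ℕ
  have hchoice : ∀ k : ℕ, ∃ N, P (Ev k N)ᶜ ≤ (c k : ENNReal) := by
    intro k
    have htend : Tendsto (fun N => P (Ev k N)) atTop (𝓝 (P (⋃ N, Ev k N))) :=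
      tendsto_measure_iUnion_atTop (hEvMono k)
    rw [hEvUnion k, measure_univ] at htend
    have hlt : (1 : ENNReal) - c k < 1 :=
      ENNReal.sub_lt_self ENNReal.one_ne_top one_ne_zero
        (by exact_mod_cast (hcpos k).ne')
    obtain ⟨N, hN⟩ := (htend.eventually (eventually_gt_nhds hlt)).exists
    refine ⟨N, ?_⟩
    rw [prob_compl_eq_one_sub (hEvMeas k N)]
    exact tsub_le_iff_right.2 ((tsub_le_iff_right.1 hN.le).trans_eq (add_comm _ _))
  choose N hN using hchoice
  refine ⟨⋂ k, F k (N k), ?_, ⋂ k, Ev k (N k), MeasurableSet.iInter fun k => hEvMeas _ _,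
    ?_, ?_⟩
  · refine TotallyBounded.isCompact_of_isClosed ?_ (isClosed_iInter fun k => hFclosed _ _)
    rw [Metric.totallyBounded_iff]
    intro η hη
    obtain ⟨k, hk⟩ := exists_nat_gt (η⁻¹)
    have hrk : r k < η := by
      rw [hr]
      have h1 : (0:ℝ) < (k:ℝ) + 1 := by positivity
      rw [inv_lt_comm₀ h1 hη]
      calc η⁻¹ < k := hk
        _ ≤ (k:ℝ) + 1 := by linarith
    refine ⟨u '' ↑(Finset.range (N k)), ((Finset.range (N k)).finite_toSet).image u, ?_⟩
    intro x hx
    have := (mem_iInter.1 hx) k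
    obtain ⟨n, hn, hxn⟩ := mem_iUnion₂.1 this
    refine mem_iUnion₂.2 ⟨u n, ?_, ?_⟩
    · exact Set.mem_image_of_mem u (Finset.mem_coe.2 hn)
    · rw [Metric.mem_ball]
      exact lt_of_le_of_lt (Metric.mem_closedBall.1 hxn) hrk
  · -- probability bound
    have hcompl : P (⋂ k, Ev k (N k))ᶜ ≤ ENNReal.ofReal ε := by
      rw [compl_iInter]
      refine (measure_iUnion_le _).trans ?_
      exact le_trans (ENNReal.tsum_le_tsum fun k => hN k) hcsum.le
    have h1 : (1:ENNReal) ≤ P (⋂ k, Ev k (N k)) + ENNReal.ofReal ε := by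
      have htot := measure_add_measure_compl (μ := P)
        (MeasurableSet.iInter fun k => hEvMeas k (N k))
      rw [measure_univ] at htot
      calc (1:ENNReal) = P (⋂ k, Ev k (N k)) + P (⋂ k, Ev k (N k))ᶜ := htot.symm
        _ ≤ _ := add_le_add le_rfl hcompl
    calc ENNReal.ofReal (1 - ε) = ENNReal.ofReal 1 - ENNReal.ofReal ε :=
          ENNReal.ofReal_sub 1 hε.le
      _ = 1 - ENNReal.ofReal ε := by rw [ENNReal.ofReal_one]
      _ ≤ P (⋂ k, Ev k (N k)) := tsub_le_iff_right.2 h1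
  · intro ω hω x hx
    exact mem_iInter.2 fun k => (mem_iInter.1 hω k) hx

set_option maxHeartbeats 1000000 in
/-- If `φ` has a strong `C`-attractor, then for every `ε > 0` there is a compact `Cε` such that
for each `δ > 0` and each compact `K ⊆ E`,
`P{K ⊆ ⋃_{s ≥ 0} ⋂_{t ≥ s} φ(t, ϑ_{-t} ω)⁻¹(Cε^δ)} ≥ 1 - ε`. -/
theorem strongC_attractor_necessary_condition
    [CompleteSpace E] [SecondCountableTopology E] [BorelSpace E] [IsProbabilityMeasure P]
    (ψ : ContinuousRDS E Ω P) (A : Ω → Set E)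
    (hA : IsStrongAttractor ψ {K : Set E | IsCompact K} A) :
    ∀ ε : ℝ, 0 < ε → ∃ Cε : Set E, IsCompact Cε ∧
      ∀ δ : ℝ, 0 < δ → ∀ K : Set E, IsCompact K →
        ENNReal.ofReal (1 - ε) ≤
          P {ω | K ⊆ ⋃ s ∈ Ici (0:ℝ), ⋂ t ∈ Ici s,
              (fun x => ψ.φ t x (ψ.θ (-t) ω)) ⁻¹' cthickening δ Cε} := by
  intro ε hε
  rcases isEmpty_or_nonempty E with hE | hE
  · refine ⟨∅, isCompact_empty, fun δ hδ K hK => ?_⟩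
    have hKe : K = ∅ := Set.eq_empty_of_isEmpty K
    have hset : {ω | K ⊆ ⋃ s ∈ Ici (0:ℝ), ⋂ t ∈ Ici s,
        (fun x => ψ.φ t x (ψ.θ (-t) ω)) ⁻¹' cthickening δ (∅ : Set E)} = univ := by
      ext ω; simp [hKe]
    rw [hset, measure_univ]
    exact ENNReal.ofReal_le_one.2 (by linarith)
  · obtain ⟨C, hC, T, hTmeas, hPT, hTC⟩ := crs_tight (P := P) hA.1 hε
    refine ⟨C, hC, fun δ hδ K hK => ?_⟩
    have hG : ∀ᵐ ω ∂P, Tendsto (fun t : ℝ =>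
        semiDist ((fun x => ψ.φ t x (ψ.θ (-t) ω)) '' K) (A ω)) atTop (𝓝 0) :=
      hA.2.2 K hK
    set Good : Set Ω := {ω | Tendsto (fun t : ℝ =>
        semiDist ((fun x => ψ.φ t x (ψ.θ (-t) ω)) '' K) (A ω)) atTop (𝓝 0)} with hGoodDef
    have hnull : P (T \ Good) = 0 :=
      measure_mono_null (fun ω hω => hω.2) (ae_iff.1 hG)
    have hsub : T ∩ Good ⊆ {ω | K ⊆ ⋃ s ∈ Ici (0:ℝ), ⋂ t ∈ Ici s,
        (fun x => ψ.φ t x (ψ.θ (-t) ω)) ⁻¹' cthickening δ C} := by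
      rintro ω ⟨hωT, hωG⟩
      have hev : ∀ᶠ t in atTop, semiDist ((fun x => ψ.φ t x (ψ.θ (-t) ω)) '' K) (A ω)
          < ENNReal.ofReal δ :=
        hωG (Iio_mem_nhds (ENNReal.ofReal_pos.2 hδ))
      obtain ⟨s0, hs0⟩ := eventually_atTop.1 hev
      intro x hx
      refine mem_biUnion (show max s0 0 ∈ Ici (0:ℝ) from mem_Ici.2 (le_max_right _ _)) ?_
      refine mem_iInter₂.2 fun t ht => ?_
      have h1 : semiDist ((fun x => ψ.φ t x (ψ.θ (-t) ω)) '' K) (A ω) < ENNReal.ofReal δ :=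
        hs0 t (le_trans (le_max_left _ _) ht)
      have h2 : EMetric.infEdist (ψ.φ t x (ψ.θ (-t) ω)) (A ω) ≤
          semiDist ((fun x => ψ.φ t x (ψ.θ (-t) ω)) '' K) (A ω) :=
        le_biSup (fun b => EMetric.infEdist b (A ω)) (mem_image_of_mem _ hx)
      have h3 : ψ.φ t x (ψ.θ (-t) ω) ∈ cthickening δ (A ω) :=
        (Metric.mem_cthickening_iff).2 (h2.trans h1.le)
      refine mem_preimage.2 (Metric.mem_cthickening_iff.2 ?_)
      exact le_trans (EMetric.infEdist_anti (hTC ω hωT)) (Metric.mem_cthickening_iff.1 h3)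
    calc ENNReal.ofReal (1 - ε) ≤ P T := hPT
      _ ≤ P (T ∩ Good) := by
          have h := measure_le_inter_add_diff P T Good
          rwa [hnull, add_zero] at h
      _ ≤ _ := measure_mono hsub
end
end

section
/- Let φ be a continuous RDS on a Polish space E over an MDS (Ω,𝓕,P,(ϑ_t)). If there exists a compact random set K which strongly attracts every compact subset of E, then φ has a strong C-attractor. -/
open MeasureTheory Set Filter Topology Metric

noncomputable section

variable {E Ω : Type*} [MetricSpace E] [MeasurableSpace E] [MeasurableSpace Ω] {P : Measure Ω}

/-! ### Auxiliary machinery for the construction of the attractor -/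

namespace StrongAttractorAux

set_option linter.unusedSectionVars false

open EMetric ENNReal

variable {E Ω : Type*} [MetricSpace E] [MeasurableSpace E] [MeasurableSpace Ω] {P : Measure Ω}

/-- The pullback map `Φ_t(x, ω) = φ(t, x, θ_{-t} ω)`. -/
def pbak (ψ : ContinuousRDS E Ω P) (t : ℝ) (x : E) (ω : Ω) : E := ψ.φ t x (ψ.θ (-t) ω)

lemma pbak_def (ψ : ContinuousRDS E Ω P) (t : ℝ) (ω : Ω) :
    (fun x => ψ.φ t x (ψ.θ (-t) ω)) = fun x => pbak ψ t x ω := rfl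

/-! #### Elementary ℝ≥0∞ and metric helpers -/

lemma inv_succ_le_inv {n j : ℕ} (h : n ≤ j) : ((j : ℝ≥0∞) + 1)⁻¹ ≤ ((n : ℝ≥0∞))⁻¹ := by
  apply ENNReal.inv_le_inv.2
  exact le_trans (by exact_mod_cast h) le_self_add

lemma inv_succ_pos (j : ℕ) : (0 : ℝ≥0∞) < ((j : ℝ≥0∞) + 1)⁻¹ := by
  simp only [ENNReal.inv_pos]
  exact ENNReal.add_ne_top.2 ⟨ENNReal.natCast_ne_top j, ENNReal.one_ne_top⟩

lemma inv_succ_tendsto : Tendsto (fun j : ℕ => ((j : ℝ≥0∞) + 1)⁻¹) atTop (𝓝 0) := by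
  rw [ENNReal.tendsto_nhds_zero]
  intro ε hε
  obtain ⟨n, hn⟩ := ENNReal.exists_inv_nat_lt hε.ne'
  filter_upwards [eventually_ge_atTop n] with j hj
  exact le_trans (inv_succ_le_inv hj) hn.le

lemma eq_zero_of_le_inv_succ {a : ℝ≥0∞} (h : ∀ j : ℕ, a ≤ ((j : ℝ≥0∞) + 1)⁻¹) : a = 0 := by
  by_contra h0
  obtain ⟨n, hn⟩ := ENNReal.exists_inv_nat_lt h0
  exact absurd ((h n).trans (inv_succ_le_inv le_rfl)) (not_le.2 hn)

lemma exists_pos_ofReal_le {ε : ℝ≥0∞} (hε : 0 < ε) : ∃ e : ℝ, 0 < e ∧ ENNReal.ofReal e ≤ ε := by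
  rcases eq_or_ne ε ⊤ with rfl | htop
  · exact ⟨1, one_pos, le_top⟩
  · exact ⟨ε.toReal, ENNReal.toReal_pos hε.ne' htop, by rw [ENNReal.ofReal_toReal htop]⟩

lemma tendsto_of_edist_tendsto_zero {p : ℕ → E} {z : E}
    (h : Tendsto (fun j => edist (p j) z) atTop (𝓝 0)) : Tendsto p atTop (𝓝 z) := by
  rw [EMetric.tendsto_atTop]
  intro ε hε
  obtain ⟨n, hn⟩ := ENNReal.exists_inv_nat_lt hε.ne'
  have := (ENNReal.tendsto_nhds_zero.1 h) _ (inv_succ_pos n)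
  rw [eventually_atTop] at this
  obtain ⟨N, hN⟩ := this
  exact ⟨N, fun j hj => lt_of_le_of_lt (hN j hj) (lt_of_le_of_lt (inv_succ_le_inv le_rfl) hn)⟩

lemma le_infDist_of_forall {S : Set E} (hS : S.Nonempty) {x : E} {b : ℝ}
    (h : ∀ y ∈ S, b ≤ dist x y) : b ≤ infDist x S := by
  rcases le_or_gt b 0 with hb | hb
  · exact hb.trans infDist_nonneg
  · have h1 : ENNReal.ofReal b ≤ infEdist x S := by
      delta EMetric.infEdist
      rw [le_infEDist]
      intro y hy
      rw [edist_dist]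
      exact ENNReal.ofReal_le_ofReal (h y hy)
    have := ENNReal.toReal_mono (infEdist_ne_top hS) h1
    rwa [ENNReal.toReal_ofReal hb.le] at this

lemma infEdist_eq_iInf_dense {u : ℕ → E} (hu : DenseRange u) {S : Set E} (hS : S.Nonempty)
    (y : E) : infEdist y S = ⨅ i, (edist y (u i) + infEdist (u i) S) := by
  refine le_antisymm (le_iInf fun i => ?_) ?_
  · rw [add_comm]
    exact infEdist_le_infEdist_add_edist
  · refine ENNReal.le_of_forall_pos_le_add fun ε hε _ => ?_
    have hε2 : 0 < (ε : ℝ) / 2 := by positivity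
    obtain ⟨i, hi⟩ := hu.exists_dist_lt y hε2
    have h2 : edist y (u i) ≤ ENNReal.ofReal ((ε : ℝ) / 2) := by
      rw [edist_dist]
      exact ENNReal.ofReal_le_ofReal hi.le
    have h3 : infEdist (u i) S ≤ infEdist y S + ENNReal.ofReal ((ε : ℝ) / 2) := by
      refine le_trans (infEdist_le_infEdist_add_edist (y := y)) ?_
      rw [edist_comm]
      exact add_le_add_right h2 _
    calc ⨅ i, (edist y (u i) + infEdist (u i) S) ≤ edist y (u i) + infEdist (u i) S :=
          iInf_le _ i
      _ ≤ ENNReal.ofReal ((ε : ℝ) / 2) + (infEdist y S + ENNReal.ofReal ((ε : ℝ) / 2)) :=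
          add_le_add h2 h3
      _ = infEdist y S + (ENNReal.ofReal ((ε : ℝ) / 2) + ENNReal.ofReal ((ε : ℝ) / 2)) := by
          ring
      _ = infEdist y S + ε := by
          rw [← ENNReal.ofReal_add hε2.le hε2.le]
          norm_num

lemma forall_infDist_le_iff {u : ℕ → E} (hu : DenseRange u) {S F : Set E} (hS : S.Nonempty)
    (hF : F.Nonempty) {c : ℝ} :
    (∀ y ∈ S, infDist y F ≤ c) ↔ ∀ i, infDist (u i) F ≤ c + infDist (u i) S := by
  constructor
  · intro h i
    have h1 : ∀ y ∈ S, infDist (u i) F - c ≤ dist (u i) y := by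
      intro y hy
      have h2 : infDist (u i) F ≤ infDist y F + dist (u i) y := infDist_le_infDist_add_dist
      have h3 := h y hy
      linarith
    have := le_infDist_of_forall hS h1
    linarith
  · intro h y hy
    refine le_of_forall_pos_le_add fun δ hδ => ?_
    obtain ⟨i, hi⟩ := hu.exists_dist_lt y (half_pos hδ)
    have h1 : infDist y F ≤ infDist (u i) F + dist y (u i) := infDist_le_infDist_add_dist
    have h2 : infDist (u i) S ≤ dist (u i) y := infDist_le_dist_of_mem hy
    have h3 : dist (u i) y = dist y (u i) := dist_comm _ _
    have h4 := h i
    linarith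

lemma tendsto_subseq_of_infEdist {S : Set E} (hc : IsCompact S) (hne : S.Nonempty) {p : ℕ → E}
    (hp : Tendsto (fun j => infEdist (p j) S) atTop (𝓝 0)) :
    ∃ z ∈ S, ∃ σ : ℕ → ℕ, StrictMono σ ∧ Tendsto (p ∘ σ) atTop (𝓝 z) := by
  choose q hqS hq using fun j => hc.exists_infEdist_eq_edist hne (p j)
  obtain ⟨z, hzS, σ, hσ, hqz⟩ := hc.tendsto_subseq hqS
  refine ⟨z, hzS, σ, hσ, ?_⟩
  have h1 : Tendsto (fun j => edist (p (σ j)) (q (σ j))) atTop (𝓝 0) := by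
    have := hp.comp hσ.tendsto_atTop
    simpa only [Function.comp_def, EMetric.infEdist, hq] using this
  have h2 : Tendsto (fun j => edist (q (σ j)) z) atTop (𝓝 0) := by
    have := hqz.edist (tendsto_const_nhds (x := z))
    simpa using this
  have hsum : Tendsto (fun j => edist (p (σ j)) (q (σ j)) + edist (q (σ j)) z) atTop (𝓝 0) := by
    have := h1.add h2
    simpa using this
  apply tendsto_of_edist_tendsto_zero
  exact tendsto_of_tendsto_of_tendsto_of_le_of_le tendsto_const_nhds hsum
    (fun j => zero_le) (fun j => edist_triangle _ _ _)

lemma exists_delta_cont {f : E → E} (hf : Continuous f) {S : Set E} (hc : IsCompact S)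
    {ε : ℝ} (hε : 0 < ε) :
    ∃ δ : ℝ, 0 < δ ∧ ∀ w : E, infEdist w S < ENNReal.ofReal δ →
      ∃ p ∈ S, dist (f w) (f p) < ε := by
  rcases S.eq_empty_or_nonempty with rfl | hne
  · exact ⟨1, one_pos, fun w hw => by simp [EMetric.infEdist, infEDist_empty] at hw⟩
  have hcont : ∀ p : E, ∃ δ, 0 < δ ∧ ∀ q, dist q p < δ → dist (f q) (f p) < ε := by
    intro p
    obtain ⟨δ, hδ, hb⟩ := Metric.continuous_iff.1 hf p ε hε
    exact ⟨δ, hδ, hb⟩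
  choose δp hδp hball using hcont
  obtain ⟨t, htS, hcov⟩ := hc.elim_nhds_subcover (fun p => Metric.ball p (δp p / 2))
      (fun p _ => Metric.ball_mem_nhds p (by have := hδp p; positivity))
  obtain ⟨y0, hy0⟩ := hne
  obtain ⟨p0, hp0t, _⟩ := mem_iUnion₂.1 (hcov hy0)
  have htne : t.Nonempty := ⟨p0, hp0t⟩
  set δ := t.inf' htne (fun p => δp p / 2) with hδdef
  have hδpos : 0 < δ := by
    rw [hδdef, Finset.lt_inf'_iff]
    intro p _
    have := hδp p
    positivity
  refine ⟨δ, hδpos, fun w hw => ?_⟩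
  obtain ⟨q, hqS, hq⟩ := infEdist_lt_iff.1 hw
  rw [edist_lt_ofReal] at hq
  obtain ⟨p, hpt, hqp⟩ := mem_iUnion₂.1 (hcov hqS)
  have hδle : δ ≤ δp p / 2 := Finset.inf'_le _ hpt
  have hqp' : dist q p < δp p / 2 := Metric.mem_ball.1 hqp
  have h1 : dist w p < δp p := by
    calc dist w p ≤ dist w q + dist q p := dist_triangle _ _ _
      _ < δ + δp p / 2 := add_lt_add hq hqp'
      _ ≤ δp p := by linarith
  exact ⟨p, htS p hpt, hball p w h1⟩

lemma tendsto_infEdist_of_near {Kc : Set E} {y : ℕ → E}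
    (h : ∀ j : ℕ, ∃ T : ℕ, ∀ T' ≥ T, infEdist (y T') Kc ≤ ((j : ℝ≥0∞) + 1)⁻¹) :
    Tendsto (fun T => infEdist (y T) Kc) atTop (𝓝 0) := by
  rw [ENNReal.tendsto_nhds_zero]
  intro ε hε
  obtain ⟨n, hn⟩ := ENNReal.exists_inv_nat_lt hε.ne'
  obtain ⟨T, hT⟩ := h n
  filter_upwards [eventually_ge_atTop T] with j hj
  exact le_trans (hT j hj) (le_trans (inv_succ_le_inv le_rfl) hn.le)

lemma exists_mem_inter_nested {S : ℕ → Set E} (hcl : ∀ T, IsClosed (S T))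
    (hmono : ∀ T T', T ≤ T' → S T' ⊆ S T) {Kc : Set E} (hKc : IsCompact Kc) (hKne : Kc.Nonempty)
    {y : ℕ → E} (hy : ∀ j, y j ∈ S j) (hyK : Tendsto (fun j => infEdist (y j) Kc) atTop (𝓝 0)) :
    ∃ z ∈ ⋂ T, S T, ∃ σ : ℕ → ℕ, StrictMono σ ∧ Tendsto (y ∘ σ) atTop (𝓝 z) := by
  obtain ⟨z, _, σ, hσ, hconv⟩ := tendsto_subseq_of_infEdist hKc hKne hyK
  refine ⟨z, ?_, σ, hσ, hconv⟩
  rw [mem_iInter]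
  intro T
  apply (hcl T).mem_of_tendsto hconv
  filter_upwards [eventually_ge_atTop T] with j hj
  exact hmono T (σ j) (le_trans hj hσ.le_apply) (hy (σ j))

lemma nested_inter_props {S : ℕ → Set E} (hcl : ∀ T, IsClosed (S T)) (hne : ∀ T, (S T).Nonempty)
    (hmono : ∀ T T', T ≤ T' → S T' ⊆ S T) {Kc : Set E} (hKc : IsCompact Kc) (hKne : Kc.Nonempty)
    (hnear : ∀ j : ℕ, ∃ T : ℕ, ∀ T' ≥ T, ∀ y ∈ S T', infEdist y Kc ≤ ((j : ℝ≥0∞) + 1)⁻¹) :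
    (⋂ T, S T).Nonempty ∧ (⋂ T, S T) ⊆ Kc ∧
      ∀ x : E, infEdist x (⋂ T, S T) = ⨆ T, infEdist x (S T) := by
  have hsub : (⋂ T, S T) ⊆ Kc := by
    intro z hz
    have h0 : infEdist z Kc = 0 := by
      apply eq_zero_of_le_inv_succ
      intro j
      obtain ⟨T, hT⟩ := hnear j
      exact hT T le_rfl z (mem_iInter.1 hz T)
    rw [← hKc.isClosed.closure_eq]
    exact mem_closure_iff_infEdist_zero.2 h0
  have hne' : (⋂ T, S T).Nonempty := by
    set y : ℕ → E := fun T => (hne T).choose with hy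
    have hyS : ∀ T, y T ∈ S T := fun T => (hne T).choose_spec
    have hyK : Tendsto (fun T => infEdist (y T) Kc) atTop (𝓝 0) := by
      apply tendsto_infEdist_of_near
      intro j
      obtain ⟨T, hT⟩ := hnear j
      exact ⟨T, fun T' hT' => hT T' hT' (y T') (hyS T')⟩
    obtain ⟨z, hz, _⟩ := exists_mem_inter_nested hcl hmono hKc hKne hyS hyK
    exact ⟨z, hz⟩
  refine ⟨hne', hsub, fun x => ?_⟩
  refine le_antisymm ?_ (iSup_le fun T => infEdist_anti (iInter_subset _ T))
  set r := ⨆ T, infEdist x (S T) with hr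
  rcases eq_or_ne r ⊤ with htop | htop
  · rw [htop]; exact le_top
  have hlt : ∀ T, infEdist x (S T) < infEdist x (S T) + ((T : ℝ≥0∞) + 1)⁻¹ := by
    intro T
    apply ENNReal.lt_add_right
    · exact ne_top_of_le_ne_top htop (le_iSup (fun T => infEdist x (S T)) T)
    · exact (inv_succ_pos T).ne'
  have hy : ∀ T : ℕ, ∃ y ∈ S T, edist x y < infEdist x (S T) + ((T : ℝ≥0∞) + 1)⁻¹ :=
    fun T => infEdist_lt_iff.1 (hlt T)
  choose y hyS hyd using hy
  have hyK : Tendsto (fun T => infEdist (y T) Kc) atTop (𝓝 0) := by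
    apply tendsto_infEdist_of_near
    intro j
    obtain ⟨T, hT⟩ := hnear j
    exact ⟨T, fun T' hT' => hT T' hT' (y T') (hyS T')⟩
  obtain ⟨z, hz, σ, hσ, hconv⟩ := exists_mem_inter_nested hcl hmono hKc hKne hyS hyK
  have h1 : infEdist x (⋂ T, S T) ≤ edist x z := infEdist_le_edist_of_mem hz
  refine h1.trans ?_
  have hconv' : Tendsto (fun j => edist x (y (σ j))) atTop (𝓝 (edist x z)) :=
    (tendsto_const_nhds (x := x)).edist hconv
  have hlim : Tendsto (fun j : ℕ => r + ((σ j : ℝ≥0∞) + 1)⁻¹) atTop (𝓝 r) := by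
    have := (tendsto_const_nhds (x := r)).add (inv_succ_tendsto.comp hσ.tendsto_atTop)
    simpa using this
  refine le_of_tendsto_of_tendsto' hconv' hlim fun j => ?_
  calc edist x (y (σ j)) ≤ infEdist x (S (σ j)) + ((σ j : ℝ≥0∞) + 1)⁻¹ := (hyd (σ j)).le
    _ ≤ r + ((σ j : ℝ≥0∞) + 1)⁻¹ := by
        exact add_le_add_left (le_iSup (fun T => infEdist x (S T)) (σ j)) _

lemma exists_dense_seq_in [SecondCountableTopology E] {C : Set E} (hne : C.Nonempty) :
    ∃ d : ℕ → E, (∀ k, d k ∈ C) ∧ C ⊆ closure (range d) := by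
  have : Nonempty C := hne.to_subtype
  obtain ⟨v, hv⟩ := TopologicalSpace.exists_dense_seq C
  refine ⟨fun k => (v k : E), fun k => (v k).2, ?_⟩
  intro x hx
  have h1 : (⟨x, hx⟩ : C) ∈ closure (range v) := by
    rw [hv.closure_range]; trivial
  have h2 : MapsTo (Subtype.val : C → E) (range v) (range fun k => (v k : E)) := by
    rintro _ ⟨k, rfl⟩; exact ⟨k, rfl⟩
  exact map_mem_closure continuous_subtype_val h1 h2

/-! #### Cocycle algebra -/

variable (ψ : ContinuousRDS E Ω P)

lemma theta_comp (a b : ℝ) (ω : Ω) : ψ.θ a (ψ.θ b ω) = ψ.θ (a + b) ω :=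
  (congrFun (ψ.theta_add a b) ω).symm

lemma pbak_add {s t : ℝ} (hs : 0 ≤ s) (ht : 0 ≤ t) (x : E) (ω : Ω) :
    pbak ψ (t + s) x ω = ψ.φ t (pbak ψ s x (ψ.θ (-t) ω)) (ψ.θ (-t) ω) := by
  have h1 : ψ.θ (-(t + s)) ω = ψ.θ (-s) (ψ.θ (-t) ω) := by
    rw [theta_comp, show -s + -t = -(t + s) by ring]
  have h2 : ψ.θ s (ψ.θ (-s) (ψ.θ (-t) ω)) = ψ.θ (-t) ω := by
    rw [theta_comp, show s + -s = (0 : ℝ) by ring, ψ.theta_zero]; rfl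
  unfold pbak
  rw [h1, ψ.cocycle s t hs ht, h2]

lemma phi_pbak {t u : ℝ} (ht : 0 ≤ t) (hu : 0 ≤ u) (x : E) (ω : Ω) :
    ψ.φ t (pbak ψ u x ω) ω = pbak ψ (t + u) x (ψ.θ t ω) := by
  have h1 : ψ.θ (-(t + u)) (ψ.θ t ω) = ψ.θ (-u) ω := by
    rw [theta_comp, show -(t + u) + t = -u by ring]
  have h2 : ψ.θ u (ψ.θ (-u) ω) = ω := by
    rw [theta_comp, show u + -u = (0 : ℝ) by ring, ψ.theta_zero]; rfl
  unfold pbak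
  rw [h1, ψ.cocycle u t hu ht, h2]

lemma measurable_theta_right (t : ℝ) : Measurable (ψ.θ t) :=
  ψ.measurable_theta.comp measurable_prodMk_left

lemma measurable_pbak (t : ℝ) (x : E) : Measurable fun ω => pbak ψ t x ω :=
  ψ.measurable_phi.comp (measurable_const.prodMk
    (measurable_const.prodMk (measurable_theta_right ψ (-t))))

lemma theta_iterate (n : ℕ) (ω : Ω) : (ψ.θ (-1))^[n] ω = ψ.θ (-(n : ℝ)) ω := by
  induction n with
  | zero =>
      simp only [Function.iterate_zero, id_eq, Nat.cast_zero, neg_zero]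
      rw [ψ.theta_zero]; rfl
  | succ n ih =>
      rw [Function.iterate_succ_apply', ih, theta_comp]
      congr 1
      push_cast
      ring

lemma ae_theta [IsProbabilityMeasure P] (t : ℝ) {p : Ω → Prop} (hp : ∀ᵐ ω ∂P, p ω) :
    ∀ᵐ ω ∂P, p (ψ.θ t ω) :=
  (ψ.measurePreserving_theta t).quasiMeasurePreserving.ae hp

lemma recurrence [IsProbabilityMeasure P] {G : Set Ω} (hG : MeasurableSet G) :
    ∀ᵐ ω ∂P, ω ∈ G → ∃ᶠ s : ℕ in atTop, ψ.θ (-(s : ℝ)) ω ∈ G := by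
  have hc := (ψ.measurePreserving_theta (-1)).conservative
  filter_upwards [hc.ae_mem_imp_frequently_image_mem hG.nullMeasurableSet] with ω h hm
  refine (h hm).mono fun n hn => ?_
  rwa [theta_iterate] at hn

/-! #### Omega-limit sets -/

lemma mem_omega_iff {B : Set E} {ω : Ω} {z : E} :
    z ∈ omegaLimitSet ψ B ω ↔ ∀ T : ℝ, 0 ≤ T →
      z ∈ closure (⋃ t ∈ Ici T, (fun x => pbak ψ t x ω) '' B) := by
  simp [omegaLimitSet, mem_iInter, mem_Ici, pbak_def]

lemma omega_spec {B : Set E} {ω : Ω} {z : E} (hz : z ∈ omegaLimitSet ψ B ω) {ε : ℝ}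
    (hε : 0 < ε) (T : ℝ) :
    ∃ t, T ≤ t ∧ 0 ≤ t ∧ ∃ y ∈ B, dist (pbak ψ t y ω) z < ε := by
  have h1 : z ∈ closure (⋃ t' ∈ Ici (max T 0), (fun x => pbak ψ t' x ω) '' B) :=
    (mem_omega_iff ψ).1 hz (max T 0) (le_max_right _ _)
  obtain ⟨w, hw, hdist⟩ := Metric.mem_closure_iff.1 h1 ε hε
  obtain ⟨t', ht', hw'⟩ := mem_iUnion₂.1 hw
  obtain ⟨y, hy, rfl⟩ := hw'
  rw [mem_Ici] at ht'
  exact ⟨t', le_trans (le_max_left _ _) ht', le_trans (le_max_right _ _) ht', y, hy,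
    by rwa [dist_comm]⟩

lemma infEdist_le_semiDist {B A : Set E} {b : E} (hb : b ∈ B) : infEdist b A ≤ semiDist B A := by
  unfold semiDist; exact le_biSup (fun b => infEdist b A) hb

lemma att_bound {B : Set E} {K0 : Set E} {ω : Ω}
    (h : Tendsto (fun t : ℝ => semiDist ((fun x => ψ.φ t x (ψ.θ (-t) ω)) '' B) K0)
      atTop (𝓝 0)) {ε : ℝ≥0∞} (hε : 0 < ε) :
    ∃ U : ℝ, ∀ t ≥ U, ∀ y ∈ B, infEdist (pbak ψ t y ω) K0 ≤ ε := by
  have h1 := (ENNReal.tendsto_nhds_zero.1 h) ε hε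
  rw [eventually_atTop] at h1
  obtain ⟨U, hU⟩ := h1
  refine ⟨U, fun t ht y hy => ?_⟩
  have hmem : pbak ψ t y ω ∈ (fun x => ψ.φ t x (ψ.θ (-t) ω)) '' B := ⟨y, hy, rfl⟩
  exact le_trans (infEdist_le_semiDist hmem) (hU t ht)

/-- Forward invariance of the omega-limit set, pathwise. -/
lemma phi_image_omega_subset {B : Set E} {t : ℝ} (ht : 0 ≤ t) (ω : Ω) :
    (fun x => ψ.φ t x ω) '' omegaLimitSet ψ B ω ⊆ omegaLimitSet ψ B (ψ.θ t ω) := by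
  rintro _ ⟨z, hz, rfl⟩
  rw [mem_omega_iff]
  intro T hT
  rw [Metric.mem_closure_iff]
  intro ε hε
  obtain ⟨δ, hδ, hball⟩ := Metric.continuous_iff.1 (ψ.continuous_phi t ht ω) z ε hε
  obtain ⟨t', ht'T, ht'0, y, hy, hd⟩ := omega_spec ψ hz hδ T
  refine ⟨ψ.φ t (pbak ψ t' y ω) ω, ?_, ?_⟩
  · rw [phi_pbak ψ ht ht'0]
    apply mem_biUnion (show t + t' ∈ Ici T by rw [mem_Ici]; linarith)
    exact ⟨y, hy, rfl⟩
  · rw [dist_comm]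
    exact hball _ hd

/-- Backward invariance of the omega-limit set, on the attraction event. -/
lemma omega_theta_subset {K0 : Set E} {B : Set E} {ω : Ω} (hKc : IsCompact K0)
    (hKne : K0.Nonempty)
    (hatt : Tendsto (fun t : ℝ => semiDist ((fun x => ψ.φ t x (ψ.θ (-t) ω)) '' B) K0)
      atTop (𝓝 0)) {t : ℝ} (ht : 0 ≤ t) :
    omegaLimitSet ψ B (ψ.θ t ω) ⊆ (fun x => ψ.φ t x ω) '' omegaLimitSet ψ B ω := by
  intro z' hz'
  have hspec : ∀ j : ℕ, ∃ t', (j : ℝ) + t ≤ t' ∧ 0 ≤ t' ∧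
      ∃ y ∈ B, dist (pbak ψ t' y (ψ.θ t ω)) z' < 1 / ((j : ℝ) + 1) := by
    intro j
    exact omega_spec ψ hz' (by positivity) ((j : ℝ) + t)
  choose tj htjT htj0 yj hyj hdj using hspec
  have huj0 : ∀ j : ℕ, 0 ≤ tj j - t := by
    intro j
    have h1 := htjT j
    have hj : (0 : ℝ) ≤ (j : ℝ) := Nat.cast_nonneg j
    linarith
  have hujge : ∀ j : ℕ, (j : ℝ) ≤ tj j - t := by
    intro j
    have h1 := htjT j
    linarith
  have hrel : ∀ j, ψ.φ t (pbak ψ (tj j - t) (yj j) ω) ω = pbak ψ (tj j) (yj j) (ψ.θ t ω) := by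
    intro j
    rw [phi_pbak ψ ht (huj0 j)]
    congr 1
    ring
  have hujtop : Tendsto (fun j : ℕ => tj j - t) atTop atTop :=
    tendsto_atTop_mono hujge tendsto_natCast_atTop_atTop
  have hwK : Tendsto (fun j => infEdist (pbak ψ (tj j - t) (yj j) ω) K0) atTop (𝓝 0) := by
    have hcomp := hatt.comp hujtop
    refine tendsto_of_tendsto_of_tendsto_of_le_of_le tendsto_const_nhds hcomp
      (fun j => zero_le) (fun j => ?_)
    exact infEdist_le_semiDist ⟨yj j, hyj j, rfl⟩
  obtain ⟨z, hzK, σ, hσ, hconv⟩ := tendsto_subseq_of_infEdist hKc hKne hwK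
  have hzW : z ∈ omegaLimitSet ψ B ω := by
    rw [mem_omega_iff]
    intro T hT
    apply mem_closure_of_tendsto hconv
    filter_upwards [eventually_ge_atTop ⌈T⌉₊] with j hj
    have h1 : T ≤ tj (σ j) - t := by
      calc T ≤ (⌈T⌉₊ : ℝ) := Nat.le_ceil T
        _ ≤ (j : ℝ) := by exact_mod_cast hj
        _ ≤ (σ j : ℝ) := by exact_mod_cast hσ.le_apply
        _ ≤ tj (σ j) - t := hujge (σ j)
    exact mem_biUnion h1 ⟨yj (σ j), hyj (σ j), rfl⟩
  refine ⟨z, hzW, ?_⟩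
  have hto1 : Tendsto (fun j => ψ.φ t (pbak ψ (tj (σ j) - t) (yj (σ j)) ω) ω) atTop
      (𝓝 (ψ.φ t z ω)) := ((ψ.continuous_phi t ht ω).tendsto z).comp hconv
  have hto2 : Tendsto (fun j => ψ.φ t (pbak ψ (tj (σ j) - t) (yj (σ j)) ω) ω) atTop (𝓝 z') := by
    rw [tendsto_iff_dist_tendsto_zero]
    have hb : ∀ j : ℕ, dist (ψ.φ t (pbak ψ (tj (σ j) - t) (yj (σ j)) ω) ω) z'
        ≤ 1 / ((j : ℝ) + 1) := by
      intro j
      rw [hrel (σ j)]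
      refine le_trans (hdj (σ j)).le ?_
      apply one_div_le_one_div_of_le (by positivity)
      have : (j : ℝ) ≤ (σ j : ℝ) := by exact_mod_cast hσ.le_apply
      linarith
    exact squeeze_zero (fun j => dist_nonneg) hb tendsto_one_div_add_atTop_nhds_zero_nat
  exact tendsto_nhds_unique hto1 hto2

/-! #### Integer-time omega-limit sets -/

/-- The union of pullback images at integer times `≥ T`. -/
def SU (C : Set E) (ω : Ω) (T : ℕ) : Set E :=
  ⋃ s : ℕ, ⋃ _ : T ≤ s, (fun x => pbak ψ (s : ℝ) x ω) '' C

/-- Integer-time omega-limit set. -/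
def Vn (C : Set E) (ω : Ω) : Set E := ⋂ T : ℕ, closure (SU ψ C ω T)

lemma SU_antitone {C : Set E} {ω : Ω} {T T' : ℕ} (h : T ≤ T') : SU ψ C ω T' ⊆ SU ψ C ω T := by
  refine iUnion_mono fun s => iUnion_subset fun hs => ?_
  exact subset_iUnion (fun _ : T ≤ s => (fun x => pbak ψ (s : ℝ) x ω) '' C) (le_trans h hs)

lemma mem_SU_of {C : Set E} {ω : Ω} {T s : ℕ} (hs : T ≤ s) {x : E} (hx : x ∈ C) :
    pbak ψ (s : ℝ) x ω ∈ SU ψ C ω T := by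
  apply mem_iUnion.2 ⟨s, _⟩
  exact mem_iUnion.2 ⟨hs, mem_image_of_mem _ hx⟩

lemma Vn_subset_omega {C : Set E} {ω : Ω} : Vn ψ C ω ⊆ omegaLimitSet ψ C ω := by
  intro z hz
  rw [mem_omega_iff]
  intro T hT
  obtain ⟨n, hn⟩ := exists_nat_ge T
  have h1 : z ∈ closure (SU ψ C ω n) := mem_iInter.1 hz n
  refine closure_mono ?_ h1
  refine iUnion_subset fun s => iUnion_subset fun hs => ?_
  have h2 : T ≤ (s : ℝ) := le_trans hn (by exact_mod_cast hs)
  exact subset_biUnion_of_mem (u := fun t => (fun x => pbak ψ t x ω) '' C)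
    (show (s : ℝ) ∈ Ici T from h2)

lemma closure_SU_eq {C : Set E} {d : ℕ → E} (hd : ∀ k, d k ∈ C) (hdd : C ⊆ closure (range d))
    (ω : Ω) (T : ℕ) : closure (SU ψ C ω T) = closure (SU ψ (range d) ω T) := by
  refine le_antisymm ?_ (closure_mono (iUnion_mono fun s => iUnion_mono fun hs =>
    image_mono (range_subset_iff.2 hd)))
  rw [← closure_closure (s := SU ψ (range d) ω T)]
  apply closure_mono
  refine iUnion_subset fun s => iUnion_subset fun hs => ?_
  have hcont : Continuous fun x => pbak ψ (s : ℝ) x ω :=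
    ψ.continuous_phi (s : ℝ) (Nat.cast_nonneg s) _
  calc (fun x => pbak ψ (s : ℝ) x ω) '' C
      ⊆ (fun x => pbak ψ (s : ℝ) x ω) '' closure (range d) := image_mono hdd
    _ ⊆ closure ((fun x => pbak ψ (s : ℝ) x ω) '' range d) :=
        image_closure_subset_closure_image hcont
    _ ⊆ closure (SU ψ (range d) ω T) := by
        apply closure_mono
        exact subset_iUnion₂ (s := fun (s' : ℕ) (_ : T ≤ s') =>
          (fun x => pbak ψ (s' : ℝ) x ω) '' range d) s hs
  

lemma infEdist_SU_range {d : ℕ → E} (ω : Ω) (T : ℕ) (x : E) :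
    infEdist x (SU ψ (range d) ω T) =
      ⨅ s : ℕ, ⨅ _ : T ≤ s, ⨅ k : ℕ, edist x (pbak ψ (s : ℝ) (d k) ω) := by
  unfold SU
  delta EMetric.infEdist
  rw [infEDist_iUnion]
  refine iInf_congr fun s => ?_
  rw [infEDist_iUnion]
  refine iInf_congr fun hs => ?_
  rw [← range_comp]
  rw [show infEDist x (range ((fun x => pbak ψ (s : ℝ) x ω) ∘ d))
      = ⨅ y ∈ range ((fun x => pbak ψ (s : ℝ) x ω) ∘ d), edist x y from rfl]
  rw [iInf_range]
  rfl

/-- The key capture lemma: on the recurrence and attraction events, every pullback limit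
point of `B` lies in the integer-time omega-limit set of the recurrent compact set. -/
lemma capture {K : Ω → Set E} {B Cm : Set E} {ω : Ω} {z : E}
    (hKc : ∀ s : ℕ, IsCompact (K (ψ.θ (-(s : ℝ)) ω)))
    (hKne : ∀ s : ℕ, (K (ψ.θ (-(s : ℝ)) ω)).Nonempty)
    (hatt : ∀ s : ℕ, Tendsto (fun t : ℝ =>
      semiDist ((fun x => ψ.φ t x (ψ.θ (-t) (ψ.θ (-(s : ℝ)) ω))) '' B)
        (K (ψ.θ (-(s : ℝ)) ω))) atTop (𝓝 0))
    (hrec : ∃ᶠ s : ℕ in atTop, K (ψ.θ (-(s : ℝ)) ω) ⊆ Cm)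
    (hz : ∀ ε : ℝ, 0 < ε → ∀ T : ℝ, ∃ t, T ≤ t ∧ 0 ≤ t ∧
      ∃ y ∈ B, dist (pbak ψ t y ω) z < ε) :
    z ∈ Vn ψ Cm ω := by
  rw [Vn, mem_iInter]
  intro T
  rw [Metric.mem_closure_iff]
  intro ε hε
  obtain ⟨s, hsT, hsub⟩ := frequently_atTop.1 hrec T
  set ω' := ψ.θ (-(s : ℝ)) ω with hω'
  have hφc : Continuous fun x => ψ.φ (s : ℝ) x ω' := ψ.continuous_phi _ (Nat.cast_nonneg s) _
  obtain ⟨δ, hδ, hdelta⟩ := exists_delta_cont hφc (hKc s) (half_pos hε)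
  have hδ2 : (0 : ℝ≥0∞) < ENNReal.ofReal (δ / 2) := ENNReal.ofReal_pos.2 (by positivity)
  obtain ⟨U, hU⟩ := att_bound ψ (hatt s) hδ2
  obtain ⟨t, htU, ht0, y, hy, hdz⟩ := hz (ε / 2) (half_pos hε) (max U 0 + s)
  have hmax0 : (0 : ℝ) ≤ max U 0 := le_max_right _ _
  have hmaxU : U ≤ max U 0 := le_max_left _ _
  have hts : (s : ℝ) ≤ t := by linarith
  have hu0 : (0 : ℝ) ≤ t - s := by linarith
  have huU : U ≤ t - s := by linarith
  have hw : infEdist (pbak ψ (t - s) y ω') (K ω') ≤ ENNReal.ofReal (δ / 2) := hU _ huU y hy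
  have hwlt : infEdist (pbak ψ (t - s) y ω') (K ω') < ENNReal.ofReal δ :=
    lt_of_le_of_lt hw (ENNReal.ofReal_lt_ofReal_iff hδ |>.2 (by linarith))
  obtain ⟨p, hpK, hfp⟩ := hdelta _ hwlt
  have hrel : ψ.φ (s : ℝ) (pbak ψ (t - s) y ω') ω' = pbak ψ t y ω := by
    have h1 := pbak_add ψ (s := t - s) (t := (s : ℝ)) hu0 (Nat.cast_nonneg s) y ω
    rw [show (s : ℝ) + (t - s) = t by ring] at h1
    exact h1.symm
  refine ⟨ψ.φ (s : ℝ) p ω', ?_, ?_⟩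
  · exact mem_SU_of ψ hsT (hsub hpK)
  · calc dist z (ψ.φ (s : ℝ) p ω')
        ≤ dist z (pbak ψ t y ω) + dist (pbak ψ t y ω) (ψ.φ (s : ℝ) p ω') := dist_triangle _ _ _
      _ < ε / 2 + ε / 2 := by
          apply add_lt_add
          · rwa [dist_comm]
          · rw [← hrel]; exact hfp
      _ = ε := by ring

/-! #### Tightness of the compact random set -/

lemma exists_tight [CompleteSpace E] [IsProbabilityMeasure P] {K : Ω → Set E}
    (hK : IsCompactRandomSet K) {u : ℕ → E} (hu : DenseRange u) (m : ℕ) :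
    ∃ C : Set E, ∃ G : Set Ω, IsCompact C ∧ C.Nonempty ∧ MeasurableSet G ∧
      (∀ ω ∈ G, K ω ⊆ C) ∧ P Gᶜ ≤ ((m : ℝ≥0∞) + 1)⁻¹ := by
  obtain ⟨hKc, hKne, hKm⟩ := hK
  set F : ℕ → Set E := fun n => u '' {i | i ≤ n} with hF
  have hFne : ∀ n, (F n).Nonempty := fun n => ⟨u 0, 0, by simp, rfl⟩
  have hFfin : ∀ n, (F n).Finite := fun n => Set.Finite.image _ (Set.finite_Iic n)
  set A : ℕ → ℕ → Set Ω :=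
    fun j n => {ω | ∀ y ∈ K ω, infDist y (F n) ≤ 1 / ((j : ℝ) + 1)} with hA
  have hAmeas : ∀ j n, MeasurableSet (A j n) := by
    intro j n
    have heq : A j n = ⋂ i, {ω | infDist (u i) (F n) ≤ 1 / ((j : ℝ) + 1) + infDist (u i) (K ω)} := by
      ext ω
      simp only [hA, mem_setOf_eq, mem_iInter]
      exact forall_infDist_le_iff hu (hKne ω) (hFne n)
    rw [heq]
    exact MeasurableSet.iInter fun i => measurableSet_le measurable_const
      (measurable_const.add (hKm (u i)))
  have hAmono : ∀ j, Monotone (A j) := by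
    intro j n n' hnn' ω hω y hy
    refine le_trans (infDist_le_infDist_of_subset ?_ (hFne n)) (hω y hy)
    exact image_mono (fun i (hi : i ≤ n) => le_trans hi hnn')
  have hAcov : ∀ j, (⋃ n, A j n) = univ := by
    intro j
    rw [eq_univ_iff_forall]
    intro ω
    have hpos : (0 : ℝ) < 1 / ((j : ℝ) + 1) := by positivity
    have hcov : K ω ⊆ ⋃ i : ℕ, Metric.ball (u i) (1 / ((j : ℝ) + 1)) := by
      intro y hy
      obtain ⟨i, hi⟩ := hu.exists_dist_lt y hpos
      exact mem_iUnion.2 ⟨i, Metric.mem_ball.2 hi⟩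
    obtain ⟨tset, htsub⟩ := (hKc ω).elim_finite_subcover _ (fun i => Metric.isOpen_ball) hcov
    refine mem_iUnion.2 ⟨tset.sup id, fun y hy => ?_⟩
    obtain ⟨i, hit, hiy⟩ := mem_iUnion₂.1 (htsub hy)
    have hmem : u i ∈ F (tset.sup id) := ⟨i, Finset.le_sup (f := id) hit, rfl⟩
    exact le_trans (infDist_le_dist_of_mem hmem) (Metric.mem_ball.1 hiy).le
  set eps : ℕ → ℝ≥0∞ := fun j => ((m : ℝ≥0∞) + 1)⁻¹ * (2 : ℝ≥0∞)⁻¹ ^ (j + 1) with heps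
  have hepsne : ∀ j, eps j ≠ 0 := by
    intro j
    apply mul_ne_zero
    · rw [Ne, ENNReal.inv_eq_zero]
      exact ENNReal.add_ne_top.2 ⟨ENNReal.natCast_ne_top m, ENNReal.one_ne_top⟩
    · apply pow_ne_zero
      rw [Ne, ENNReal.inv_eq_zero]
      exact ENNReal.ofNat_ne_top
  have hchoice : ∀ j : ℕ, ∃ n, 1 - eps j < P (A j n) := by
    intro j
    have hlim : Tendsto (fun n => P (A j n)) atTop (𝓝 (P univ)) := by
      have := tendsto_measure_iUnion_atTop (μ := P) (hAmono j)
      rwa [hAcov j] at this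
    have hlt : (1 : ℝ≥0∞) - eps j < P univ := by
      rw [measure_univ]
      exact ENNReal.sub_lt_self ENNReal.one_ne_top one_ne_zero (hepsne j)
    exact ((hlim.eventually (eventually_gt_nhds hlt)).and (eventually_ge_atTop 0)).exists.imp
      fun n hn => hn.1
  choose nj hnj using hchoice
  have hcompl : ∀ j, P (A j (nj j))ᶜ ≤ eps j := by
    intro j
    rw [prob_compl_eq_one_sub (hAmeas j (nj j))]
    refine le_trans (tsub_le_tsub_left (hnj j).le 1) tsub_tsub_le
  set C : Set E := {y | ∀ j, infDist y (F (nj j)) ≤ 1 / ((j : ℝ) + 1)} with hC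
  have hCclosed : IsClosed C := by
    have : C = ⋂ j, {y | infDist y (F (nj j)) ≤ 1 / ((j : ℝ) + 1)} := by
      ext y; simp [hC]
    rw [this]
    exact isClosed_iInter fun j =>
      isClosed_le (Metric.continuous_infDist_pt _) continuous_const
  have hCtb : TotallyBounded C := by
    rw [Metric.totallyBounded_iff]
    intro ε hε
    obtain ⟨j, hj⟩ := exists_nat_gt (1 / ε)
    have hjlt : 1 / ((j : ℝ) + 1) < ε := by
      rw [div_lt_iff₀ (by positivity)]
      rw [div_lt_iff₀ hε] at hj
      have : (j : ℝ) ≤ (j : ℝ) + 1 := by linarith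
      nlinarith
    refine ⟨F (nj j), hFfin (nj j), fun y hy => ?_⟩
    have h1 : infDist y (F (nj j)) < ε := lt_of_le_of_lt (hy j) hjlt
    obtain ⟨p, hp, hpd⟩ := (Metric.infDist_lt_iff (hFne (nj j))).1 h1
    exact mem_iUnion₂.2 ⟨p, hp, Metric.mem_ball.2 hpd⟩
  have hCcomp : IsCompact C := hCtb.isCompact_of_isClosed hCclosed
  refine ⟨C ∪ {u 0}, ⋂ j, A j (nj j), hCcomp.union isCompact_singleton,
    ⟨u 0, Or.inr rfl⟩, MeasurableSet.iInter fun j => hAmeas j (nj j), ?_, ?_⟩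
  · intro ω hω y hy
    left
    intro j
    exact (mem_iInter.1 hω j) y hy
  · rw [compl_iInter]
    refine le_trans (measure_iUnion_le _) ?_
    refine le_trans (ENNReal.tsum_le_tsum fun j => hcompl j) ?_
    rw [heps]
    rw [ENNReal.tsum_mul_left]
    have hsum : (∑' j : ℕ, (2 : ℝ≥0∞)⁻¹ ^ (j + 1)) = 1 := by
      have h1 : (∑' j : ℕ, (2 : ℝ≥0∞)⁻¹ ^ (j + 1)) = (2 : ℝ≥0∞)⁻¹ * ∑' j : ℕ, (2 : ℝ≥0∞)⁻¹ ^ j := by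
        rw [← ENNReal.tsum_mul_left]
        congr 1
        funext j
        rw [pow_succ]
        ring
      rw [h1, ENNReal.tsum_geometric, ENNReal.one_sub_inv_two, inv_inv]
      exact ENNReal.inv_mul_cancel two_ne_zero ENNReal.ofNat_ne_top
    rw [hsum, mul_one]

lemma measurable_infEdist_K [SecondCountableTopology E] [OpensMeasurableSpace E] {K : Ω → Set E}
    (hK : IsCompactRandomSet K) {u : ℕ → E} (hu : DenseRange u) {g : Ω → E}
    (hg : Measurable g) : Measurable fun ω => infEdist (g ω) (K ω) := by
  obtain ⟨hKc, hKne, hKm⟩ := hK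
  have h1 : ∀ ω, infEdist (g ω) (K ω) = ⨅ i, (edist (g ω) (u i) + infEdist (u i) (K ω)) :=
    fun ω => infEdist_eq_iInf_dense hu (hKne ω) _
  have h2 : ∀ i : ℕ, Measurable fun ω => infEdist (u i) (K ω) := by
    intro i
    have heq : (fun ω => infEdist (u i) (K ω))
        = fun ω => ENNReal.ofReal (infDist (u i) (K ω)) := by
      funext ω
      exact (ENNReal.ofReal_toReal (infEdist_ne_top (hKne ω))).symm
    rw [heq]
    exact ENNReal.measurable_ofReal.comp (hKm (u i))
  simp only [h1]
  exact Measurable.iInf fun i => (hg.edist measurable_const).add (h2 i)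

end StrongAttractorAux

open StrongAttractorAux ENNReal EMetric

/-- If there is a compact random set `K` strongly attracting every compact subset of `E`,
then `φ` has a strong `C`-attractor. -/
theorem strongC_attractor_of_strongly_attracting_set
    [CompleteSpace E] [SecondCountableTopology E] [BorelSpace E] [IsProbabilityMeasure P]
    (ψ : ContinuousRDS E Ω P) (K : Ω → Set E) (hK : IsCompactRandomSet K)
    (hattr : ∀ C : Set E, IsCompact C → StronglyAttracts ψ K C) :
    ∃ A : Ω → Set E, IsStrongAttractor ψ {C : Set E | IsCompact C} A := by
  classical
  -- ### Setup: nonemptiness, dense sequence, tight compacts, dense sequences inside them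
  have hΩ : Nonempty Ω := by
    by_contra h
    rw [not_nonempty_iff] at h
    have h1 : P univ = 1 := measure_univ
    rw [Set.univ_eq_empty_iff.2 h, measure_empty] at h1
    exact zero_ne_one h1
  obtain ⟨ω0⟩ := hΩ
  have hEne : Nonempty E := ⟨(hK.2.1 ω0).choose⟩
  obtain ⟨u, hu⟩ := TopologicalSpace.exists_dense_seq E
  choose Cm Gm hCmc hCmne hGmmeas hGmsub hGmP using fun m : ℕ => exists_tight (P := P) hK hu m
  choose dm hdmem hddense using fun m : ℕ => exists_dense_seq_in (hCmne m)
  -- ### The good measurable set `Gset`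
  set Gset : Set Ω := ⋂ m : ℕ, ⋂ j : ℕ, ⋃ T : ℕ, ⋂ s : ℕ, ⋂ (_ : T ≤ s), ⋂ k : ℕ,
      {ω | EMetric.infEdist (pbak ψ (s : ℝ) (dm m k) ω) (K ω) ≤ ((j : ℝ≥0∞) + 1)⁻¹}
    with hGsetdef
  have hGmeas : MeasurableSet Gset := by
    refine MeasurableSet.iInter fun m => MeasurableSet.iInter fun j =>
      MeasurableSet.iUnion fun T => MeasurableSet.iInter fun s =>
      MeasurableSet.iInter fun _ => MeasurableSet.iInter fun k => ?_
    exact measurableSet_le (measurable_infEdist_K hK hu (measurable_pbak ψ _ _))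
      measurable_const
  have hGspec : ∀ ω ∈ Gset, ∀ m j : ℕ, ∃ T : ℕ, ∀ s : ℕ, T ≤ s → ∀ k : ℕ,
      EMetric.infEdist (pbak ψ (s : ℝ) (dm m k) ω) (K ω) ≤ ((j : ℝ≥0∞) + 1)⁻¹ := by
    intro ω hω m j
    have h1 := mem_iInter.1 (mem_iInter.1 hω m) j
    obtain ⟨T, hT⟩ := mem_iUnion.1 h1
    exact ⟨T, fun s hs k => mem_iInter.1 (mem_iInter.1 (mem_iInter.1 hT s) hs) k⟩
  -- ### The candidate attractor
  set Acore : Ω → Set E := fun ω => closure (⋃ m, Vn ψ (Cm m) ω) with hAcore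
  set A : Ω → Set E := fun ω => if ω ∈ Gset then Acore ω else {u 0} with hAdef
  have hAG : ∀ ω ∈ Gset, A ω = Acore ω := fun ω hω => by
    rw [hAdef]; simp only [if_pos hω]
  have hAnG : ∀ ω, ω ∉ Gset → A ω = {u 0} := fun ω hω => by
    rw [hAdef]; simp only [if_neg hω]
  -- ### Pointwise structure on `Gset` via the nested-intersection lemma
  have hVnSd : ∀ (m : ℕ) (ω : Ω),
      Vn ψ (Cm m) ω = ⋂ T : ℕ, closure (SU ψ (range (dm m)) ω T) := by
    intro m ω
    exact iInter_congr fun T => closure_SU_eq ψ (hdmem m) (hddense m) ω T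
  have hSdne : ∀ (m : ℕ) (ω : Ω) (T : ℕ), (closure (SU ψ (range (dm m)) ω T)).Nonempty :=
    fun m ω T => ⟨pbak ψ (T : ℝ) (dm m 0) ω, subset_closure (mem_SU_of ψ le_rfl ⟨0, rfl⟩)⟩
  have hkey : ∀ ω ∈ Gset, ∀ m : ℕ, (Vn ψ (Cm m) ω).Nonempty ∧ Vn ψ (Cm m) ω ⊆ K ω ∧
      ∀ x : E, EMetric.infEdist x (Vn ψ (Cm m) ω)
        = ⨆ T : ℕ, EMetric.infEdist x (closure (SU ψ (range (dm m)) ω T)) := by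
    intro ω hω m
    have hnear : ∀ j : ℕ, ∃ T : ℕ, ∀ T' ≥ T, ∀ y ∈ closure (SU ψ (range (dm m)) ω T'),
        EMetric.infEdist y (K ω) ≤ ((j : ℝ≥0∞) + 1)⁻¹ := by
      intro j
      obtain ⟨T, hT⟩ := hGspec ω hω m j
      refine ⟨T, fun T' hT' y hy => ?_⟩
      have hcl : IsClosed {y : E | EMetric.infEdist y (K ω) ≤ ((j : ℝ≥0∞) + 1)⁻¹} :=
        isClosed_le continuous_infEdist continuous_const
      refine hcl.closure_subset_iff.2 ?_ hy
      rintro _ hmem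
      obtain ⟨s, hmem2⟩ := mem_iUnion.1 hmem
      obtain ⟨hs, hmem3⟩ := mem_iUnion.1 hmem2
      obtain ⟨x', ⟨k, rfl⟩, rfl⟩ := hmem3
      exact hT s (le_trans hT' hs) k
    have hprops := nested_inter_props (fun T => isClosed_closure) (hSdne m ω)
      (fun T T' h => closure_mono (SU_antitone ψ h)) (hK.1 ω) (hK.2.1 ω) hnear
    rw [hVnSd m ω]
    exact hprops
  -- ### Pointwise compactness and nonemptiness of `A`
  have hAcompact : ∀ ω, IsCompact (A ω) := by
    intro ω
    by_cases hω : ω ∈ Gset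
    · rw [hAG ω hω, hAcore]
      have hsubK : closure (⋃ m, Vn ψ (Cm m) ω) ⊆ K ω := by
        apply closure_minimal _ (hK.1 ω).isClosed
        exact iUnion_subset fun m => (hkey ω hω m).2.1
      exact (hK.1 ω).of_isClosed_subset isClosed_closure hsubK
    · rw [hAnG ω hω]; exact isCompact_singleton
  have hAne : ∀ ω, (A ω).Nonempty := by
    intro ω
    by_cases hω : ω ∈ Gset
    · rw [hAG ω hω, hAcore]
      obtain ⟨z, hz⟩ := (hkey ω hω 0).1
      exact ⟨z, subset_closure (mem_iUnion.2 ⟨0, hz⟩)⟩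
    · rw [hAnG ω hω]; exact ⟨u 0, rfl⟩
  -- ### Measurability of `ω ↦ infDist x (A ω)`
  have hAmeas : ∀ x : E, Measurable fun ω => infDist x (A ω) := by
    intro x
    have hfor : ∀ ω, EMetric.infEdist x (A ω) = if ω ∈ Gset then
        (⨅ m : ℕ, ⨆ T : ℕ, ⨅ s : ℕ, ⨅ (_ : T ≤ s), ⨅ k : ℕ,
          edist x (pbak ψ (s : ℝ) (dm m k) ω)) else edist x (u 0) := by
      intro ω
      by_cases hω : ω ∈ Gset
      · rw [if_pos hω, hAG ω hω, hAcore]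
        delta EMetric.infEdist
        rw [infEDist_closure, infEDist_iUnion]
        refine iInf_congr fun m => ?_
        refine ((hkey ω hω m).2.2 x).trans ?_
        refine iSup_congr fun T => ?_
        delta EMetric.infEdist
        rw [infEDist_closure]
        exact infEdist_SU_range ψ ω T x
      · rw [if_neg hω, hAnG ω hω]; exact infEDist_singleton
    have hmeas2 : Measurable fun ω => EMetric.infEdist x (A ω) := by
      simp only [hfor]
      refine Measurable.ite hGmeas ?_ measurable_const
      refine Measurable.iInf fun m => Measurable.iSup fun T => Measurable.iInf fun s => ?_
      refine Measurable.iInf fun _ => Measurable.iInf fun k => ?_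
      exact measurable_const.edist (measurable_pbak ψ _ _)
    exact ENNReal.measurable_toReal.comp hmeas2
  -- ### Almost-sure events
  have hatt_self : ∀ᵐ ω ∂P, ∀ m : ℕ, Tendsto (fun t : ℝ =>
      semiDist ((fun x => ψ.φ t x (ψ.θ (-t) ω)) '' Cm m) (K ω)) atTop (𝓝 0) :=
    ae_all_iff.2 fun m => hattr (Cm m) (hCmc m)
  have hatt_all : ∀ᵐ ω ∂P, ∀ m s : ℕ, Tendsto (fun t : ℝ =>
      semiDist ((fun x => ψ.φ t x (ψ.θ (-t) (ψ.θ (-(s : ℝ)) ω))) '' Cm m)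
        (K (ψ.θ (-(s : ℝ)) ω))) atTop (𝓝 0) :=
    ae_all_iff.2 fun m => ae_all_iff.2 fun s => ae_theta ψ _ (hattr (Cm m) (hCmc m))
  have hGae : ∀ᵐ ω ∂P, ω ∈ Gset := by
    filter_upwards [hatt_self] with ω hatts
    rw [hGsetdef]
    refine mem_iInter.2 fun m => mem_iInter.2 fun j => ?_
    obtain ⟨U, hU⟩ := att_bound ψ (hatts m) (inv_succ_pos j)
    obtain ⟨T, hT⟩ := exists_nat_ge U
    refine mem_iUnion.2 ⟨T, ?_⟩
    refine mem_iInter.2 fun s => mem_iInter.2 fun hs => mem_iInter.2 fun k => ?_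
    exact hU (s : ℝ) (le_trans hT (by exact_mod_cast hs)) (dm m k) (hdmem m k)
  have hrec_ae : ∀ᵐ ω ∂P, ∃ m : ℕ, ∃ᶠ s : ℕ in atTop, K (ψ.θ (-(s : ℝ)) ω) ⊆ Cm m := by
    have h1 : ∀ m : ℕ, ∀ᵐ ω ∂P, ω ∈ Gm m → ∃ᶠ s : ℕ in atTop, ψ.θ (-(s : ℝ)) ω ∈ Gm m :=
      fun m => recurrence ψ (hGmmeas m)
    have h2 : ∀ᵐ ω ∂P, ∃ m, ω ∈ Gm m := by
      rw [ae_iff]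
      have heq : {ω | ¬∃ m, ω ∈ Gm m} = ⋂ m, (Gm m)ᶜ := by
        ext ω; simp [not_exists]
      rw [heq]
      apply eq_zero_of_le_inv_succ
      intro m
      exact le_trans (measure_mono (iInter_subset _ m)) (hGmP m)
    filter_upwards [ae_all_iff.2 h1, h2] with ω hrec1 hex
    obtain ⟨m, hm⟩ := hex
    exact ⟨m, (hrec1 m hm).mono fun s hs => hGmsub m _ hs⟩
  -- ### A.s. identification of `A` with the union of real-time omega-limit sets
  have hAomega : ∀ᵐ ω ∂P, A ω = closure (⋃ m, omegaLimitSet ψ (Cm m) ω) := by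
    filter_upwards [hGae, hatt_all, hrec_ae] with ω hG hatta hrec
    rw [hAG ω hG, hAcore]
    apply Subset.antisymm
    · exact closure_mono (iUnion_mono fun m => Vn_subset_omega ψ)
    · apply closure_minimal _ isClosed_closure
      refine iUnion_subset fun m z hz => ?_
      obtain ⟨m0, hfr⟩ := hrec
      have hzV : z ∈ Vn ψ (Cm m0) ω :=
        capture ψ (fun s => hK.1 _) (fun s => hK.2.1 _) (hatta m) hfr
          (fun εr hεr T => omega_spec ψ hz hεr T)
      exact subset_closure (mem_iUnion.2 ⟨m0, hzV⟩)
  -- ### Conclusion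
  refine ⟨A, ⟨hAcompact, hAne, hAmeas⟩, ?_, ?_⟩
  · -- strict invariance
    intro t ht
    filter_upwards [hAomega, ae_theta ψ t hAomega, hatt_self] with ω h1 h2 hatts
    apply Subset.antisymm
    · rw [h1, h2]
      calc (fun x => ψ.φ t x ω) '' closure (⋃ m, omegaLimitSet ψ (Cm m) ω)
          ⊆ closure ((fun x => ψ.φ t x ω) '' ⋃ m, omegaLimitSet ψ (Cm m) ω) :=
            image_closure_subset_closure_image (ψ.continuous_phi t ht ω)
        _ = closure (⋃ m, (fun x => ψ.φ t x ω) '' omegaLimitSet ψ (Cm m) ω) := by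
            rw [image_iUnion]
        _ ⊆ closure (⋃ m, omegaLimitSet ψ (Cm m) (ψ.θ t ω)) :=
            closure_mono (iUnion_mono fun m => phi_image_omega_subset ψ ht ω)
    · rw [h2]
      have hclosed : IsClosed ((fun x => ψ.φ t x ω) '' A ω) :=
        ((hAcompact ω).image (ψ.continuous_phi t ht ω)).isClosed
      apply closure_minimal _ hclosed
      refine iUnion_subset fun m => ?_
      refine (omega_theta_subset ψ (hK.1 ω) (hK.2.1 ω) (hatts m) ht).trans ?_
      apply image_mono
      rw [h1]
      exact (subset_iUnion (fun m => omegaLimitSet ψ (Cm m) ω) m).trans subset_closure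
  · -- strong attraction of every compact set
    intro B hB
    have hattB := hattr B hB
    have hattBs : ∀ᵐ ω ∂P, ∀ s : ℕ, Tendsto (fun t : ℝ =>
        semiDist ((fun x => ψ.φ t x (ψ.θ (-t) (ψ.θ (-(s : ℝ)) ω))) '' B)
          (K (ψ.θ (-(s : ℝ)) ω))) atTop (𝓝 0) :=
      ae_all_iff.2 fun s => ae_theta ψ _ hattB
    filter_upwards [hGae, hattB, hattBs, hrec_ae] with ω hG hatt0 hatts hrec
    rw [ENNReal.tendsto_nhds_zero]
    intro ε hε
    obtain ⟨e, he0, hee⟩ := exists_pos_ofReal_le hε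
    by_contra hno
    rw [Filter.not_eventually] at hno
    have hfreq : ∀ j : ℕ, ∃ t, (j : ℝ) ≤ t ∧ ∃ y ∈ B,
        ENNReal.ofReal e < EMetric.infEdist (pbak ψ t y ω) (A ω) := by
      intro j
      obtain ⟨t, htj, hns⟩ := frequently_atTop.1 hno (j : ℝ)
      rw [not_le] at hns
      have hex : ∃ y ∈ B, ε < EMetric.infEdist (pbak ψ t y ω) (A ω) := by
        by_contra hc
        push_neg at hc
        refine absurd ?_ hns.not_ge
        unfold semiDist
        refine iSup₂_le ?_
        rintro _ ⟨y, hy, rfl⟩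
        exact hc y hy
      obtain ⟨y, hy, hlt⟩ := hex
      exact ⟨t, htj, y, hy, lt_of_le_of_lt hee hlt⟩
    choose tj htj hfr using hfreq
    choose yj hyj hbig using hfr
    have htjtop : Tendsto tj atTop atTop :=
      tendsto_atTop_mono htj tendsto_natCast_atTop_atTop
    have hKd : Tendsto (fun j => EMetric.infEdist (pbak ψ (tj j) (yj j) ω) (K ω))
        atTop (𝓝 0) :=
      tendsto_of_tendsto_of_tendsto_of_le_of_le tendsto_const_nhds (hatt0.comp htjtop)
        (fun j => zero_le) (fun j => infEdist_le_semiDist ⟨yj j, hyj j, rfl⟩)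
    obtain ⟨z, hzK, σ, hσ, hconv⟩ := tendsto_subseq_of_infEdist (hK.1 ω) (hK.2.1 ω) hKd
    obtain ⟨m0, hfreqrec⟩ := hrec
    have hz : ∀ εr : ℝ, 0 < εr → ∀ T : ℝ, ∃ t, T ≤ t ∧ 0 ≤ t ∧
        ∃ y ∈ B, dist (pbak ψ t y ω) z < εr := by
      intro εr hεr T
      obtain ⟨N, hN⟩ := Metric.tendsto_atTop.1 hconv εr hεr
      set j := max N ⌈T⌉₊ with hj
      have hdist := hN j (le_max_left _ _)
      have hTle : T ≤ tj (σ j) := by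
        calc T ≤ (⌈T⌉₊ : ℝ) := Nat.le_ceil T
          _ ≤ (j : ℝ) := by exact_mod_cast le_max_right N ⌈T⌉₊
          _ ≤ (σ j : ℝ) := by exact_mod_cast hσ.le_apply
          _ ≤ tj (σ j) := htj (σ j)
      have h0le : (0 : ℝ) ≤ tj (σ j) := le_trans (Nat.cast_nonneg _) (htj (σ j))
      exact ⟨tj (σ j), hTle, h0le, yj (σ j), hyj (σ j), hdist⟩
    have hcap : z ∈ Vn ψ (Cm m0) ω :=
      capture ψ (fun s => hK.1 _) (fun s => hK.2.1 _) hatts hfreqrec hz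
    have hzA : z ∈ A ω := by
      rw [hAG ω hG, hAcore]
      exact subset_closure (mem_iUnion.2 ⟨m0, hcap⟩)
    obtain ⟨N, hN⟩ := Metric.tendsto_atTop.1 hconv e he0
    have h2 : EMetric.infEdist (pbak ψ (tj (σ N)) (yj (σ N)) ω) (A ω)
        ≤ edist (pbak ψ (tj (σ N)) (yj (σ N)) ω) z := EMetric.infEdist_le_edist_of_mem hzA
    have h3 : edist (pbak ψ (tj (σ N)) (yj (σ N)) ω) z < ENNReal.ofReal e := by
      rw [edist_lt_ofReal]
      exact hN N le_rfl
    exact absurd (((hbig (σ N)).trans_le h2).trans h3) (lt_irrefl _)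
end
end

section
/- Let φ be a continuous RDS on a Polish space E over an MDS (Ω,𝓕,P,(ϑ_t)). If there exists a compact random set K which weakly attracts every compact subset of E, then for every ε>0 there exists a compact subset C_ε of E such that for each δ>0 and each compact subset C of E there is a t_0>0 with P{φ(t,ω)(C) ⊆ C_ε^δ} ≥ 1−ε for all t ≥ t_0. -/
open MeasureTheory Set Filter Topology Metric

noncomputable section

variable {E Ω : Type*} [MetricSpace E] [MeasurableSpace E] [MeasurableSpace Ω] {P : Measure Ω}

/-- Effros-type measurability: the event that the random compact set hits a fixed open set
is measurable. -/
lemma measurable_hit {E Ω : Type*} [MetricSpace E] [MeasurableSpace Ω]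
    [TopologicalSpace.SeparableSpace E] [Nonempty E]
    {K : Ω → Set E} (hKne : ∀ ω, (K ω).Nonempty)
    (hKm : ∀ x : E, Measurable fun ω => infDist x (K ω))
    {U : Set E} (hU : IsOpen U) :
    MeasurableSet {ω | (K ω ∩ U).Nonempty} := by
  obtain ⟨x, hx⟩ := TopologicalSpace.exists_dense_seq E
  have hset : {ω | (K ω ∩ U).Nonempty} =
      ⋃ (n : ℕ) (q : ℚ), {ω | ball (x n) (q : ℝ) ⊆ U ∧ infDist (x n) (K ω) < q} := by
    ext ω
    simp only [mem_iUnion, mem_setOf_eq]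
    constructor
    · rintro ⟨y, hyK, hyU⟩
      obtain ⟨r, hr, hrU⟩ := Metric.isOpen_iff.1 hU y hyU
      obtain ⟨n, hn⟩ := hx.exists_dist_lt y (by positivity : (0:ℝ) < r/3)
      obtain ⟨q, hq1, hq2⟩ := exists_rat_btwn (show dist (x n) y < 2*r/3 by
        rw [dist_comm]; linarith)
      refine ⟨n, q, fun z hz => hrU ?_, lt_of_le_of_lt (infDist_le_dist_of_mem hyK) hq1⟩
      rw [mem_ball] at hz ⊢
      calc dist z y ≤ dist z (x n) + dist (x n) y := dist_triangle _ _ _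
        _ < q + r/3 := by rw [dist_comm (x n) y]; exact add_lt_add hz hn
        _ < 2*r/3 + r/3 := by linarith
        _ = r := by ring
    · rintro ⟨n, q, hqU, hqi⟩
      obtain ⟨y, hy, hdy⟩ := (infDist_lt_iff (hKne ω)).1 hqi
      exact ⟨y, hy, hqU (by rwa [mem_ball, dist_comm])⟩
  rw [hset]
  refine MeasurableSet.iUnion fun n => MeasurableSet.iUnion fun q => ?_
  have : {ω | ball (x n) (q : ℝ) ⊆ U ∧ infDist (x n) (K ω) < q} =
      {ω : Ω | ball (x n) (q : ℝ) ⊆ U} ∩ ((fun ω => infDist (x n) (K ω)) ⁻¹' Iio (q : ℝ)) := rfl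
  rw [this]
  exact (MeasurableSet.const _).inter ((hKm (x n)) measurableSet_Iio)

/-- If there is a compact random set `K` weakly attracting every compact subset of `E`, then
for every `ε > 0` there is a compact `Cε` such that for each `δ > 0` and each compact `C ⊆ E`
there is `t₀ > 0` with `P{φ(t,ω)(C) ⊆ Cε^δ} ≥ 1 - ε` for all `t ≥ t₀`. -/
theorem weakC_attractor_necessary_condition
    [CompleteSpace E] [SecondCountableTopology E] [BorelSpace E] [IsProbabilityMeasure P]
    (ψ : ContinuousRDS E Ω P) (K : Ω → Set E) (hK : IsCompactRandomSet K)
    (hattr : ∀ C : Set E, IsCompact C → WeaklyAttracts ψ K C) :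
    ∀ ε : ℝ, 0 < ε → ∃ Cε : Set E, IsCompact Cε ∧
      ∀ δ : ℝ, 0 < δ → ∀ C : Set E, IsCompact C →
        ∃ t₀ : ℝ, 0 < t₀ ∧ ∀ t : ℝ, t₀ ≤ t →
          ENNReal.ofReal (1 - ε) ≤
            P {ω | (fun x => ψ.φ t x ω) '' C ⊆ cthickening δ Cε} := by
  intro ε hε
  haveI : Nonempty Ω := by
    by_contra h
    rw [not_nonempty_iff] at h
    have h1 : P univ = 1 := measure_univ
    rw [Set.univ_eq_empty_iff.2 h, measure_empty] at h1
    exact zero_ne_one h1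
  haveI : Nonempty E := ⟨(hK.2.1 (Classical.arbitrary Ω)).choose⟩
  obtain ⟨x, hx⟩ := TopologicalSpace.exists_dense_seq E
  set U : ℕ → ℕ → Set E := fun m n => ⋃ i ∈ Finset.range n, closedBall (x i) (1/(m+1))
    with hUdef
  have hUclosed : ∀ m n, IsClosed (U m n) := fun m n =>
    (Finset.range n).finite_toSet.isClosed_biUnion fun i _ => isClosed_closedBall
  have hUsub : ∀ (m : ℕ) {n n' : ℕ}, n ≤ n' → U m n ⊆ U m n' := by
    intro m n n' h
    intro y hy
    obtain ⟨i, hi, hyi⟩ := mem_iUnion₂.1 hy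
    exact mem_biUnion (Finset.mem_range.2 (lt_of_lt_of_le (Finset.mem_range.1 hi) h)) hyi
  have hUmeas : ∀ m n, MeasurableSet {ω | K ω ⊆ U m n} := by
    intro m n
    have h := measurable_hit hK.2.1 hK.2.2 (hUclosed m n).isOpen_compl
    have heq : {ω | K ω ⊆ U m n} = {ω | (K ω ∩ (U m n)ᶜ).Nonempty}ᶜ := by
      ext ω; simp [Set.inter_compl_nonempty_iff]
    rw [heq]; exact h.compl
  have hrpos : ∀ m : ℕ, (0:ℝ) < 1/(m+1) := fun m => by positivity
  have hcover : ∀ m : ℕ, ⋃ n, {ω | K ω ⊆ U m n} = univ := by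
    intro m
    rw [eq_univ_iff_forall]
    intro ω
    have hc : K ω ⊆ ⋃ i : ℕ, ball (x i) (1/(m+1)) := fun y _ => by
      obtain ⟨i, hi⟩ := hx.exists_dist_lt y (hrpos m)
      exact mem_iUnion.2 ⟨i, mem_ball.2 hi⟩
    obtain ⟨t, ht⟩ := (hK.1 ω).elim_finite_subcover _ (fun i : ℕ => isOpen_ball) hc
    refine mem_iUnion.2 ⟨t.sup id + 1, fun y hy => ?_⟩
    obtain ⟨i, hit, hyi⟩ := mem_iUnion₂.1 (ht hy)
    exact mem_biUnion (Finset.mem_range.2 (Nat.lt_succ_of_le (Finset.le_sup (f := id) hit)))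
      (ball_subset_closedBall hyi)
  set η : ℕ → ENNReal := fun m => ENNReal.ofReal (ε/2) * 2⁻¹ ^ (m+1) with hηdef
  have hηpos : ∀ m, 0 < η m := fun m =>
    ENNReal.mul_pos (ENNReal.ofReal_pos.2 (by linarith)).ne'
      (pow_ne_zero _ (by norm_num))
  have hbig : ∀ m : ℕ, ∃ n, 1 - η m < P {ω | K ω ⊆ U m n} := by
    intro m
    have hdir : Directed (· ⊆ ·) fun n => {ω | K ω ⊆ U m n} :=
      Monotone.directed_le fun n n' h ω hω => hω.trans (hUsub m h)
    have hsup : (⨆ n, P {ω | K ω ⊆ U m n}) = 1 := by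
      rw [← hdir.measure_iUnion, hcover m, measure_univ]
    have hlt : (1:ENNReal) - η m < 1 :=
      ENNReal.sub_lt_self ENNReal.one_ne_top one_ne_zero (hηpos m).ne'
    have hlt2 : 1 - η m < ⨆ n, P {ω | K ω ⊆ U m n} := by rw [hsup]; exact hlt
    exact lt_iSup_iff.1 hlt2
  choose nm hnm using hbig
  set Cε : Set E := ⋂ m, U m (nm m) with hCεdef
  have hCεcompact : IsCompact Cε := by
    refine TotallyBounded.isCompact_of_isClosed ?_
      (isClosed_iInter fun m => hUclosed m (nm m))
    rw [Metric.totallyBounded_iff]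
    intro r hr
    obtain ⟨m, hm⟩ := exists_nat_one_div_lt hr
    refine ⟨x '' {i | i < nm m}, (Set.finite_Iio (nm m)).image x, fun y hy => ?_⟩
    have hympt : y ∈ U m (nm m) := mem_iInter.1 hy m
    obtain ⟨i, hi, hyi⟩ := mem_iUnion₂.1 hympt
    exact mem_biUnion (mem_image_of_mem x (Finset.mem_range.1 hi))
      (closedBall_subset_ball hm hyi)
  set S : Set Ω := ⋂ m, {ω | K ω ⊆ U m (nm m)} with hSdef
  have hSmeas : MeasurableSet S := MeasurableSet.iInter fun m => hUmeas m (nm m)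
  have hSsub : ∀ ω ∈ S, K ω ⊆ Cε := fun ω hω y hy =>
    mem_iInter.2 fun m => (mem_iInter.1 hω m) hy
  have hScompl : P Sᶜ ≤ ENNReal.ofReal (ε/2) := by
    rw [hSdef, compl_iInter]
    refine le_trans (measure_iUnion_le _) ?_
    have hb : ∀ m, P {ω | K ω ⊆ U m (nm m)}ᶜ ≤ η m := by
      intro m
      rw [prob_compl_eq_one_sub (hUmeas m (nm m))]
      exact tsub_le_iff_right.2 (tsub_le_iff_left.1 (hnm m).le)
    calc ∑' m, P {ω | K ω ⊆ U m (nm m)}ᶜ ≤ ∑' m, η m := ENNReal.tsum_le_tsum hb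
      _ = ENNReal.ofReal (ε/2) * ∑' m : ℕ, (2⁻¹:ENNReal) ^ (m+1) := by
          rw [hηdef, ENNReal.tsum_mul_left]
      _ = ENNReal.ofReal (ε/2) := by
          have hgeo : (∑' m : ℕ, (2⁻¹:ENNReal) ^ (m+1)) = 1 := by
            simp_rw [pow_succ']
            rw [ENNReal.tsum_mul_left, ENNReal.tsum_geometric, ENNReal.one_sub_inv_two,
              inv_inv]
            exact ENNReal.inv_mul_cancel two_ne_zero ENNReal.ofNat_ne_top
          rw [hgeo, mul_one]
  have hPS : 1 - ENNReal.ofReal (ε/2) ≤ P S := by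
    have h1 : P Sᶜ = 1 - P S := prob_compl_eq_one_sub hSmeas
    calc 1 - ENNReal.ofReal (ε/2) ≤ 1 - P Sᶜ := tsub_le_tsub_left hScompl 1
      _ = P S := by rw [h1, ENNReal.sub_sub_cancel ENNReal.one_ne_top prob_le_one]
  refine ⟨Cε, hCεcompact, ?_⟩
  intro δ hδ C hC
  have hw := hattr C hC (ENNReal.ofReal (δ/2)) (ENNReal.ofReal_pos.2 (by linarith))
  have hev := hw.eventually_lt_const (ENNReal.ofReal_pos.2 (show (0:ℝ) < ε/2 by linarith))
  obtain ⟨a, ha⟩ := eventually_atTop.1 hev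
  refine ⟨max a 1, lt_of_lt_of_le one_pos (le_max_right a 1), fun t ht => ?_⟩
  set bad : Set Ω := {ω | ENNReal.ofReal (δ/2) <
    semiDist ((fun x => ψ.φ t x (ψ.θ (-t) ω)) '' C) (K ω)} with hbaddef
  have hbad : P bad < ENNReal.ofReal (ε/2) := ha t (le_trans (le_max_left a 1) ht)
  set G : Set Ω := S \ bad with hGdef
  set B : Set Ω := {ω | (fun x => ψ.φ t x (ψ.θ (-t) ω)) '' C ⊆ cthickening δ Cε} with hBdef
  have hGB : G ⊆ B := by
    rintro ω ⟨hωS, hωb⟩ y hy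
    have h1 : semiDist ((fun x => ψ.φ t x (ψ.θ (-t) ω)) '' C) (K ω) ≤ ENNReal.ofReal (δ/2) :=
      not_lt.1 hωb
    rw [semiDist] at h1
    have h2 : EMetric.infEdist y (K ω) ≤ ENNReal.ofReal (δ/2) :=
      le_trans (le_biSup (fun b => EMetric.infEdist b (K ω)) hy) h1
    have h3 : EMetric.infEdist y Cε ≤ EMetric.infEdist y (K ω) :=
      EMetric.infEdist_anti (hSsub ω hωS)
    rw [mem_cthickening_iff]
    exact le_trans (le_trans h3 h2) (ENNReal.ofReal_le_ofReal (by linarith))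
  have hid1 : ∀ ω, ψ.θ (-t) (ψ.θ t ω) = ω := by
    intro ω
    have h := congrFun (ψ.theta_add (-t) t) ω
    simp only [Function.comp_apply] at h
    rw [← h, neg_add_cancel, ψ.theta_zero, id]
  have hid2 : ∀ ω, ψ.θ t (ψ.θ (-t) ω) = ω := by
    intro ω
    have h := congrFun (ψ.theta_add t (-t)) ω
    simp only [Function.comp_apply] at h
    rw [← h, add_neg_cancel, ψ.theta_zero, id]
  have hAeq : {ω | (fun x => ψ.φ t x ω) '' C ⊆ cthickening δ Cε} = ψ.θ t ⁻¹' B := by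
    ext ω
    simp only [hBdef, mem_preimage, mem_setOf_eq, hid1]
  have hkey : ψ.θ (-t) ⁻¹' (ψ.θ t ⁻¹' G) = G := by
    ext ω
    simp only [mem_preimage, hid2]
  have hPG : P G ≤ P (ψ.θ t ⁻¹' G) := by
    have h := Measure.le_map_apply (μ := P)
      (ψ.measurePreserving_theta (-t)).measurable.aemeasurable (ψ.θ t ⁻¹' G)
    rwa [(ψ.measurePreserving_theta (-t)).map_eq, hkey] at h
  have hG_lb : 1 - ENNReal.ofReal ε ≤ P G := by
    have hsplit : P S ≤ P G + P bad :=
      le_trans (measure_mono fun ω hω => by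
        by_cases hb : ω ∈ bad
        · exact Or.inr hb
        · exact Or.inl ⟨hω, hb⟩) (measure_union_le G bad)
    have h6 : P S - P bad ≤ P G := tsub_le_iff_right.2 hsplit
    have h7 : (1 - ENNReal.ofReal (ε/2)) - ENNReal.ofReal (ε/2) ≤ P S - P bad :=
      tsub_le_tsub hPS hbad.le
    have h8 : 1 - ENNReal.ofReal ε = (1 - ENNReal.ofReal (ε/2)) - ENNReal.ofReal (ε/2) := by
      rw [tsub_tsub, ← ENNReal.ofReal_add (by linarith) (by linarith)]
      norm_num
    rw [h8]; exact le_trans h7 h6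
  rw [hAeq]
  calc ENNReal.ofReal (1-ε) = 1 - ENNReal.ofReal ε := by
        rw [ENNReal.ofReal_sub 1 hε.le, ENNReal.ofReal_one]
    _ ≤ P G := hG_lb
    _ ≤ P (ψ.θ t ⁻¹' G) := hPG
    _ ≤ P (ψ.θ t ⁻¹' B) := measure_mono (preimage_mono hGB)
end
end

section
/- Let E be a Polish space with metric d, (Ω,𝓕,P) a probability space, and φ : [0,∞) × Ω × E → E jointly measurable with x ↦ φ(t,ω,x) continuous for all t and ω. Let C ⊆ E be compact and nonempty, B ⊆ E closed, and α > 0. Then the map t ↦ γ(t) := sup{η > 0 : P{ω : φ(t,ω,·)(C^η) ⊆ B} ≥ α} is measurable on [0,∞). -/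
open MeasureTheory Set Metric
open scoped ENNReal Classical

lemma key_sSup (S : Set ℝ)
    (hpos : ∀ η ∈ S, 0 < η)
    (hdown : ∀ η ∈ S, ∀ η', 0 < η' → η' ≤ η → η' ∈ S) :
    sSup S = (⨆ q : ℚ, if ((q : ℝ) ∈ S) then ENNReal.ofReal q else 0).toReal := by
  classical
  rcases eq_empty_or_nonempty S with h | h
  · simp [h, Real.sSup_empty]
  by_cases hbdd : BddAbove S
  · set c := sSup S with hc
    obtain ⟨η₀, hη₀⟩ := id h
    have hcpos : 0 < c := lt_of_lt_of_le (hpos _ hη₀) (le_csSup hbdd hη₀)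
    have hle : (⨆ q : ℚ, if ((q : ℝ) ∈ S) then ENNReal.ofReal q else 0) ≤ ENNReal.ofReal c := by
      refine iSup_le fun q => ?_
      split_ifs with hq
      · exact ENNReal.ofReal_le_ofReal (le_csSup hbdd hq)
      · exact zero_le
    have hne : (⨆ q : ℚ, if ((q : ℝ) ∈ S) then ENNReal.ofReal q else 0) ≠ ⊤ :=
      fun h' => by simp [h'] at hle
    refine le_antisymm ?_ ?_
    · refine csSup_le h fun η hη => ?_
      by_contra hlt
      push_neg at hlt
      have h0 : (0:ℝ) ≤ (⨆ q : ℚ, if ((q : ℝ) ∈ S) then ENNReal.ofReal q else 0).toReal :=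
        ENNReal.toReal_nonneg
      obtain ⟨q, hq1, hq2⟩ := exists_rat_btwn hlt
      have hqS : (q : ℝ) ∈ S := hdown _ hη _ (lt_of_le_of_lt h0 hq1) hq2.le
      have : ENNReal.ofReal q ≤ ⨆ q : ℚ, if ((q : ℝ) ∈ S) then ENNReal.ofReal q else 0 := by
        have := le_iSup (fun q : ℚ => if ((q : ℝ) ∈ S) then ENNReal.ofReal q else 0) q
        rwa [if_pos hqS] at this
      have := ENNReal.toReal_mono hne this
      rw [ENNReal.toReal_ofReal (lt_of_le_of_lt h0 hq1).le] at this
      exact absurd hq1 (not_lt.2 this)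
    · have := ENNReal.toReal_mono ENNReal.ofReal_ne_top hle
      rwa [ENNReal.toReal_ofReal hcpos.le] at this
  · rw [Real.sSup_of_not_bddAbove hbdd]
    have htop : (⨆ q : ℚ, if ((q : ℝ) ∈ S) then ENNReal.ofReal q else 0) = ⊤ := by
      rw [eq_top_iff, ← ENNReal.iSup_natCast]
      refine iSup_le fun n => ?_
      obtain ⟨η, hη, hn⟩ := not_bddAbove_iff.1 hbdd (n : ℝ)
      obtain ⟨q, hq1, hq2⟩ := exists_rat_btwn hn
      have hqS : (q : ℝ) ∈ S := hdown _ hη _ (lt_of_le_of_lt (Nat.cast_nonneg n) hq1) hq2.le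
      calc (n : ℝ≥0∞) = ENNReal.ofReal (n : ℝ) := by simp
        _ ≤ ENNReal.ofReal q := ENNReal.ofReal_le_ofReal hq1.le
        _ ≤ _ := by
            have := le_iSup (fun q : ℚ => if ((q : ℝ) ∈ S) then ENNReal.ofReal q else 0) q
            rwa [if_pos hqS] at this
    simp [htop]


/-- Measurability of `t ↦ γ(t) := sup {η > 0 : P{ω : φ(t,ω)(C^η) ⊆ B} ≥ α}` for a jointly
measurable map `φ` which is continuous in the space variable, `C` compact nonempty, `B` closed,
`α > 0` (with `sup ∅ = 0`, the convention of `sSup` on `ℝ`). -/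
theorem measurable_gamma
    {E Ω : Type*} [MetricSpace E] [CompleteSpace E] [SecondCountableTopology E]
    [MeasurableSpace E] [BorelSpace E] [MeasurableSpace Ω]
    (P : Measure Ω) [IsProbabilityMeasure P]
    (φ : ℝ → Ω → E → E)
    (hmeas : Measurable fun p : ℝ × Ω × E => φ p.1 p.2.1 p.2.2)
    (hcont : ∀ t ω, Continuous fun x => φ t ω x)
    (C : Set E) (hC : IsCompact C) (hCne : C.Nonempty)
    (B : Set E) (hB : IsClosed B) (α : ℝ) (hα : 0 < α) :
    Measurable fun t : ℝ =>
      sSup {η : ℝ | 0 < η ∧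
        ENNReal.ofReal α ≤ P {ω | ∀ x ∈ cthickening η C, φ t ω x ∈ B}} := by
  classical
  have hevent : ∀ η : ℝ,
      MeasurableSet {p : ℝ × Ω | ∀ x ∈ cthickening η C, φ p.1 p.2 x ∈ B} := by
    intro η
    obtain ⟨D, hDsub, hDc, hDd⟩ :=
      (TopologicalSpace.IsSeparable.of_separableSpace
        (cthickening η C)).exists_countable_dense_subset
    have hset : {p : ℝ × Ω | ∀ x ∈ cthickening η C, φ p.1 p.2 x ∈ B}
        = ⋂ x ∈ D, {p : ℝ × Ω | φ p.1 p.2 x ∈ B} := by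
      ext p
      simp only [mem_setOf_eq, mem_iInter]
      constructor
      · intro h x hx; exact h x (hDsub hx)
      · intro h x hx
        have hcl : IsClosed ((fun y => φ p.1 p.2 y) ⁻¹' B) := hB.preimage (hcont _ _)
        have hsub : D ⊆ (fun y => φ p.1 p.2 y) ⁻¹' B := fun y hy => h y hy
        exact (hcl.closure_subset_iff.2 hsub) (hDd hx)
    rw [hset]
    refine MeasurableSet.biInter hDc fun x _ => ?_
    have hm : Measurable fun p : ℝ × Ω => φ p.1 p.2 x :=
      hmeas.comp (measurable_fst.prodMk (measurable_snd.prodMk measurable_const))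
    exact hm hB.measurableSet
  have hg : ∀ η : ℝ,
      Measurable fun t => P {ω | ∀ x ∈ cthickening η C, φ t ω x ∈ B} := fun η =>
    measurable_measure_prodMk_left (hevent η)
  have heq := funext fun t : ℝ => key_sSup
      {η : ℝ | 0 < η ∧ ENNReal.ofReal α ≤ P {ω | ∀ x ∈ cthickening η C, φ t ω x ∈ B}}
      (fun η hη => hη.1)
      (fun η hη η' h0 hle => ⟨h0, le_trans hη.2
        (measure_mono fun ω hω x hx => hω x (cthickening_mono hle C hx))⟩)
  rw [heq]
  refine Measurable.ennreal_toReal (Measurable.iSup fun q => ?_)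
  refine Measurable.ite ?_ measurable_const measurable_const
  by_cases hq : (0 : ℝ) < (q : ℝ)
  · have hs : {t : ℝ | (q : ℝ) ∈ {η : ℝ | 0 < η ∧
        ENNReal.ofReal α ≤ P {ω | ∀ x ∈ cthickening η C, φ t ω x ∈ B}}}
        = {t : ℝ | ENNReal.ofReal α ≤ P {ω | ∀ x ∈ cthickening (q : ℝ) C, φ t ω x ∈ B}} := by
      ext t; simp [mem_setOf_eq, hq]
    rw [hs]
    exact measurableSet_le measurable_const (hg q)
  · have hs : {t : ℝ | (q : ℝ) ∈ {η : ℝ | 0 < η ∧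
        ENNReal.ofReal α ≤ P {ω | ∀ x ∈ cthickening η C, φ t ω x ∈ B}}}
        = ∅ := by
      ext t; simp [mem_setOf_eq, hq]
    rw [hs]
    exact MeasurableSet.empty
end

section
/- Let E be a Polish space with metric d, (Ω,𝓕,P) a probability space, and φ : [0,∞) × Ω × E → E jointly measurable with x ↦ φ(t,ω,x) continuous for all t and ω. Let C ⊆ E be compact and nonempty, B ⊆ E closed, and r ≥ 0. Then the set {(t,ω) ∈ [0,∞) × Ω : φ(t,ω,·)(C^r) ⊆ B} belongs to the product σ-algebra 𝓑([0,∞)) ⊗ 𝓕. -/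
open MeasureTheory Set Metric

/-- For a jointly measurable map `φ` which is continuous in the space variable, `C` compact
nonempty, `B` closed and `r ≥ 0`, the set `{(t,ω) : φ(t,ω)(C^r) ⊆ B}` is product measurable. -/
theorem measurableSet_image_cthickening_subset
    {E Ω : Type*} [MetricSpace E] [CompleteSpace E] [SecondCountableTopology E]
    [MeasurableSpace E] [BorelSpace E] [MeasurableSpace Ω]
    (P : Measure Ω) [IsProbabilityMeasure P]
    (φ : ℝ → Ω → E → E)
    (hmeas : Measurable fun p : ℝ × Ω × E => φ p.1 p.2.1 p.2.2)
    (hcont : ∀ t ω, Continuous fun x => φ t ω x)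
    (C : Set E) (hC : IsCompact C) (hCne : C.Nonempty)
    (B : Set E) (hB : IsClosed B) (r : ℝ) (hr : 0 ≤ r) :
    MeasurableSet {p : ℝ × Ω | ∀ x ∈ cthickening r C, φ p.1 p.2 x ∈ B} := by
  set K := cthickening r C
  obtain ⟨D, hDK, hDc, hKD⟩ :=
    (TopologicalSpace.IsSeparable.of_separableSpace K).exists_countable_dense_subset
  have key : {p : ℝ × Ω | ∀ x ∈ K, φ p.1 p.2 x ∈ B}
      = ⋂ x ∈ D, {p : ℝ × Ω | φ p.1 p.2 x ∈ B} := by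
    ext p
    simp only [mem_setOf_eq, mem_iInter]
    constructor
    · exact fun h x hx => h x (hDK hx)
    · intro h x hx
      have hx' : x ∈ closure D := hKD hx
      have : φ p.1 p.2 x ∈ closure (B) := by
        have : φ p.1 p.2 x ∈ closure ((fun y => φ p.1 p.2 y) '' D) :=
          image_closure_subset_closure_image (hcont p.1 p.2)
            (mem_image_of_mem _ hx')
        refine closure_mono ?_ this
        rintro _ ⟨y, hy, rfl⟩; exact h y hy
      rwa [hB.closure_eq] at this
  rw [key]
  refine MeasurableSet.biInter hDc fun x _ => ?_
  have hφx : Measurable fun p : ℝ × Ω => φ p.1 p.2 x :=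
    hmeas.comp (measurable_fst.prodMk (measurable_snd.prodMk measurable_const))
  exact hφx hB.measurableSet
end
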